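/- (Solecki) Let I be an ideal on ℕ containing all finite sets. Then I is an Fσ P-ideal if and only if there is a lower semicontinuous submeasure φ such that I = Exh(φ) = Fin(φ), where Fin(φ) = {A ⊆ ℕ : φ(A) < ∞} and Exh(φ) = {A ⊆ ℕ : lim_{n→∞} φ(A \ {0,1,…,n}) = 0}. -/

import Mathlib

open Set Filter Topology ENNReal

def IsIdeal {X : Type*} (I : Set (Set X)) : Prop :=
  ∅ ∈ I ∧ (Set.univ : Set X) ∉ I ∧ (∀ A B : Set X, A ∈ I → B ∈ I → A ∪ B ∈ I) ∧
    ∀ A B : Set X, A ⊆ B → B ∈ I → A ∈ I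

def ContainsFin {X : Type*} (I : Set (Set X)) : Prop := ∀ A : Set X, A.Finite → A ∈ I

noncomputable def chi (A : Set ℕ) : ℕ → Bool := fun n => @decide (n ∈ A) (Classical.propDecidable _)

def IsFsigma {Y : Type*} [TopologicalSpace Y] (S : Set Y) : Prop :=
  ∃ F : ℕ → Set Y, (∀ n, IsClosed (F n)) ∧ S = ⋃ n, F n

def IsLSCSM (φ : Set ℕ → ℝ≥0∞) : Prop :=
  φ ∅ = 0 ∧ (∀ A B : Set ℕ, φ A ≤ φ (A ∪ B) ∧ φ (A ∪ B) ≤ φ A + φ B) ∧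
    ∀ A : Set ℕ, Tendsto (fun n => φ (A ∩ {k | k ≤ n})) atTop (nhds (φ A))

def FinPhi (φ : Set ℕ → ℝ≥0∞) : Set (Set ℕ) := {A | φ A < ⊤}

def ExhPhi (φ : Set ℕ → ℝ≥0∞) : Set (Set ℕ) :=
  {A | Tendsto (fun n => φ (A \ {k | k ≤ n})) atTop (nhds 0)}

def IsPIdeal (I : Set (Set ℕ)) : Prop :=
  ∀ E : ℕ → Set ℕ, (∀ n, E n ∈ I) → ∃ F ∈ I, ∀ n, (E n \ F).Finite

namespace Solecki

abbrev Bs := ℕ → Bool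

def st (f : Bs) : Set ℕ := {n | f n = true}

@[simp] lemma chi_eq_true {A : Set ℕ} {n : ℕ} : chi A n = true ↔ n ∈ A := by
  simp [chi]

@[simp] lemma st_chi (A : Set ℕ) : st (chi A) = A := by
  ext n; simp [st]

@[simp] lemma chi_st (f : Bs) : chi (st f) = f := by
  funext n
  by_cases h : f n = true
  · simp [chi, st, h]
  · simp only [Bool.not_eq_true] at h
    simp [chi, st, h]

lemma chi_injective : Function.Injective chi := by
  intro A B h
  have := congrArg st h
  simpa using this

lemma mem_chi_image {J : Set (Set ℕ)} {f : Bs} : f ∈ chi '' J ↔ st f ∈ J := by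
  constructor
  · rintro ⟨A, hA, rfl⟩; simpa using hA
  · intro h; exact ⟨st f, h, chi_st f⟩

/-! ### basic operations on `Bs` -/

def lee (f g : Bs) : Prop := ∀ n, f n = true → g n = true

lemma lee_refl (f : Bs) : lee f f := fun _ h => h

lemma lee_trans {f g h : Bs} (h1 : lee f g) (h2 : lee g h) : lee f h :=
  fun n hn => h2 n (h1 n hn)

lemma lee_iff_subset {f g : Bs} : lee f g ↔ st f ⊆ st g := Iff.rfl

def j2 (f g : Bs) : Bs := fun n => f n || g n

def m2 (f g : Bs) : Bs := fun n => f n && g n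

def tl (m : ℕ) (f : Bs) : Bs := fun n => if n ≤ m then false else f n

def upto (m : ℕ) : Bs := fun n => decide (n ≤ m)

def bbot : Bs := fun _ => false

@[simp] lemma j2_eq_true {f g : Bs} {n : ℕ} : j2 f g n = true ↔ f n = true ∨ g n = true := by
  simp [j2]

@[simp] lemma m2_eq_true {f g : Bs} {n : ℕ} : m2 f g n = true ↔ f n = true ∧ g n = true := by
  simp [m2]

@[simp] lemma tl_eq_true {m : ℕ} {f : Bs} {n : ℕ} : tl m f n = true ↔ m < n ∧ f n = true := by
  simp only [tl]
  by_cases h : n ≤ m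
  · have : ¬ m < n := Nat.not_lt.mpr h
    simp [h, this]
  · simp [h, Nat.not_le.mp h]

@[simp] lemma upto_eq_true {m n : ℕ} : upto m n = true ↔ n ≤ m := by simp [upto]

@[simp] lemma bbot_eq (n : ℕ) : bbot n = false := rfl

lemma lee_j2_left (f g : Bs) : lee f (j2 f g) := fun n h => by simp [h]
lemma lee_j2_right (f g : Bs) : lee g (j2 f g) := fun n h => by simp [h]

lemma j2_lee {f g h : Bs} (hf : lee f h) (hg : lee g h) : lee (j2 f g) h := by
  intro n hn
  rcases j2_eq_true.mp hn with h' | h'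
  · exact hf n h'
  · exact hg n h'

lemma lee_tl (m : ℕ) (f : Bs) : lee (tl m f) f := by
  intro n hn; exact (tl_eq_true.mp hn).2

lemma tl_lee_tl {m m' : ℕ} (h : m ≤ m') {f g : Bs} (hfg : lee f g) :
    lee (tl m' f) (tl m g) := by
  intro n hn
  rcases tl_eq_true.mp hn with ⟨h1, h2⟩
  exact tl_eq_true.mpr ⟨lt_of_le_of_lt h h1, hfg n h2⟩

lemma tl_j2 (m : ℕ) (f g : Bs) : tl m (j2 f g) = j2 (tl m f) (tl m g) := by
  funext n; simp only [tl, j2]; by_cases h : n ≤ m <;> simp [h]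

lemma chi_setdiff (A : Set ℕ) (m : ℕ) : chi (A \ {k | k ≤ m}) = tl m (chi A) := by
  funext n
  by_cases h : n ≤ m
  · simp [tl, h, chi]
  · by_cases hA : n ∈ A <;> simp [tl, h, chi, hA]

lemma st_tl (m : ℕ) (f : Bs) : st (tl m f) = st f \ {k | k ≤ m} := by
  ext n; simp only [st, tl_eq_true, mem_setOf_eq, mem_diff]
  constructor
  · rintro ⟨h1, h2⟩; exact ⟨h2, by simpa using Nat.not_le.mpr h1⟩
  · rintro ⟨h1, h2⟩; exact ⟨Nat.not_le.mp (by simpa using h2), h1⟩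

/-! ### continuity toolbox -/

lemma cont_coord {α : Type*} [TopologicalSpace α] {f g : α → Bool} (hf : Continuous f)
    (hg : Continuous g) {op : Bool → Bool → Bool} : Continuous fun a => op (f a) (g a) := by
  have : (fun a => op (f a) (g a)) = (fun p : Bool × Bool => op p.1 p.2) ∘ fun a => (f a, g a) := rfl
  rw [this]
  exact (continuous_of_discreteTopology).comp (hf.prodMk hg)

lemma cont_j2 {α : Type*} [TopologicalSpace α] {f g : α → Bs} (hf : Continuous f)
    (hg : Continuous g) : Continuous fun a => j2 (f a) (g a) := by
  apply continuous_pi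
  intro n
  exact cont_coord ((continuous_apply n).comp hf) ((continuous_apply n).comp hg)

lemma cont_m2 {α : Type*} [TopologicalSpace α] {f g : α → Bs} (hf : Continuous f)
    (hg : Continuous g) : Continuous fun a => m2 (f a) (g a) := by
  apply continuous_pi
  intro n
  exact cont_coord ((continuous_apply n).comp hf) ((continuous_apply n).comp hg)

lemma cont_tl (m : ℕ) : Continuous fun f : Bs => tl m f := by
  apply continuous_pi
  intro n
  simp only [tl]
  by_cases h : n ≤ m
  · simp only [h, if_true]; exact continuous_const
  · simp only [h, if_false]; exact continuous_apply n

/-! ### cylinders -/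

lemma exists_cyl_subset {U : Set Bs} (hU : IsOpen U) {x : Bs} (hx : x ∈ U) :
    ∃ k, ∀ y : Bs, (∀ i ≤ k, y i = x i) → y ∈ U := by
  rcases (isOpen_pi_iff.mp hU) x hx with ⟨I, u, h1, h2⟩
  rcases I.eq_empty_or_nonempty with rfl | hne
  · exact ⟨0, fun y _ => h2 (by simp)⟩
  · refine ⟨I.max' hne, fun y hy => h2 ?_⟩
    intro a ha
    have : y a = x a := hy a (Finset.le_max' I a ha)
    rw [this]
    exact (h1 a ha).2

lemma exists_cyl_subset_prod {U : Set (Bs × Bs)} (hU : IsOpen U) {x : Bs × Bs} (hx : x ∈ U) :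
    ∃ k, ∀ y : Bs × Bs, (∀ i ≤ k, y.1 i = x.1 i) → (∀ i ≤ k, y.2 i = x.2 i) → y ∈ U := by
  rcases (isOpen_prod_iff.mp hU) x.1 x.2 hx with ⟨V, W, hV, hW, hxV, hxW, hVW⟩
  rcases exists_cyl_subset hV hxV with ⟨k1, h1⟩
  rcases exists_cyl_subset hW hxW with ⟨k2, h2⟩
  refine ⟨max k1 k2, fun y hy1 hy2 => ?_⟩
  have : (y.1, y.2) ∈ V ×ˢ W := by
    constructor
    · exact h1 y.1 fun i hi => hy1 i (le_trans hi (le_max_left _ _))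
    · exact h2 y.2 fun i hi => hy2 i (le_trans hi (le_max_right _ _))
  exact hVW this

def trunc (k : ℕ) (f : Bs) : Bs := fun n => if n ≤ k then f n else false

lemma tendsto_trunc (f : Bs) : Tendsto (fun k => trunc k f) atTop (𝓝 f) := by
  rw [tendsto_pi_nhds]
  intro n
  apply Tendsto.congr' (f₁ := fun _ => f n)
  · filter_upwards [eventually_ge_atTop n] with k hk
    simp [trunc, hk]
  · exact tendsto_const_nhds

lemma lee_trunc (k : ℕ) (f : Bs) : lee (trunc k f) f := by
  intro n hn
  simp only [trunc] at hn
  by_cases h : n ≤ k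
  · simpa [h] using hn
  · simp [h] at hn


/-! ### lscsm generalities -/

section LSCSM

variable {φ : Set ℕ → ℝ≥0∞}

lemma lscsm_mono (hsub : ∀ A B : Set ℕ, φ A ≤ φ (A ∪ B) ∧ φ (A ∪ B) ≤ φ A + φ B)
    {A B : Set ℕ} (h : A ⊆ B) : φ A ≤ φ B := by
  have := (hsub A B).1
  rwa [Set.union_eq_self_of_subset_left h] at this

lemma lscsm_iSup (hsub : ∀ A B : Set ℕ, φ A ≤ φ (A ∪ B) ∧ φ (A ∪ B) ≤ φ A + φ B)
    (hlsc : ∀ A : Set ℕ, Tendsto (fun n => φ (A ∩ {k | k ≤ n})) atTop (nhds (φ A)))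
    (A : Set ℕ) : φ A = ⨆ n, φ (A ∩ {k | k ≤ n}) := by
  have hmono : Monotone fun n => φ (A ∩ {k | k ≤ n}) := by
    intro a b hab
    exact lscsm_mono hsub (by intro x hx; exact ⟨hx.1, le_trans hx.2 hab⟩)
  exact tendsto_nhds_unique (hlsc A) (tendsto_atTop_iSup hmono)

lemma lscsm_finsubadd (h0 : φ ∅ = 0)
    (hsub : ∀ A B : Set ℕ, φ A ≤ φ (A ∪ B) ∧ φ (A ∪ B) ≤ φ A + φ B)
    (B : ℕ → Set ℕ) (m : ℕ) :
    φ (⋃ i ∈ Finset.range m, B i) ≤ ∑ i ∈ Finset.range m, φ (B i) := by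
  induction m with
  | zero => simp [h0]
  | succ m ih =>
      rw [Finset.range_add_one]
      have h1 : (⋃ i ∈ insert m (Finset.range m), B i) = (⋃ i ∈ Finset.range m, B i) ∪ B m := by
        simp [Set.union_comm]
      rw [h1, Finset.sum_insert (by simp)]
      calc φ ((⋃ i ∈ Finset.range m, B i) ∪ B m)
          ≤ φ (⋃ i ∈ Finset.range m, B i) + φ (B m) := (hsub _ _).2
        _ ≤ (∑ i ∈ Finset.range m, φ (B i)) + φ (B m) := by gcongr
        _ = φ (B m) + ∑ i ∈ Finset.range m, φ (B i) := by ring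

lemma lscsm_ctblsubadd (h0 : φ ∅ = 0)
    (hsub : ∀ A B : Set ℕ, φ A ≤ φ (A ∪ B) ∧ φ (A ∪ B) ≤ φ A + φ B)
    (hlsc : ∀ A : Set ℕ, Tendsto (fun n => φ (A ∩ {k | k ≤ n})) atTop (nhds (φ A)))
    (B : ℕ → Set ℕ) : φ (⋃ i, B i) ≤ ∑' i, φ (B i) := by
  classical
  rw [lscsm_iSup hsub hlsc]
  apply iSup_le
  intro n
  have hfin : ((⋃ i, B i) ∩ {k | k ≤ n}).Finite :=
    (Set.finite_Iic n).subset (fun x hx => hx.2)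
  choose g hg using fun (x : ℕ) (hx : x ∈ ⋃ i, B i) => Set.mem_iUnion.mp hx
  set s := hfin.toFinset with hs
  set r := (s.sup fun y => if hy : y ∈ ⋃ i, B i then g y hy else 0) + 1 with hr
  have hcov : (⋃ i, B i) ∩ {k | k ≤ n} ⊆ ⋃ i ∈ Finset.range r, B i := by
    intro x hx
    have hxs : x ∈ s := hfin.mem_toFinset.mpr hx
    have hxu : x ∈ ⋃ i, B i := hx.1
    refine Set.mem_biUnion (Finset.mem_range.mpr ?_) (hg x hxu)
    calc g x hxu = (if hx' : x ∈ ⋃ i, B i then g x hx' else 0) := by simp [hxu]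
      _ ≤ s.sup fun y => if hy : y ∈ ⋃ i, B i then g y hy else 0 :=
          Finset.le_sup (f := fun y => if hy : y ∈ ⋃ i, B i then g y hy else 0) hxs
      _ < r := by omega
  calc φ ((⋃ i, B i) ∩ {k | k ≤ n}) ≤ φ (⋃ i ∈ Finset.range r, B i) := lscsm_mono hsub hcov
    _ ≤ ∑ i ∈ Finset.range r, φ (B i) := lscsm_finsubadd h0 hsub B r
    _ ≤ ∑' i, φ (B i) := ENNReal.sum_le_tsum _

end LSCSM

/-! ### cylinders are open; level sets closed -/

lemma cyl_open (x : Bs) (k : ℕ) : IsOpen {y : Bs | ∀ i ≤ k, y i = x i} := by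
  have h0 : {y : Bs | ∀ i ≤ k, y i = x i} = ⋂ i ∈ Finset.range (k+1), {y : Bs | y i = x i} := by
    ext y
    simp only [Set.mem_setOf_eq, Set.mem_iInter, Finset.mem_range]
    constructor
    · intro h i hi; exact h i (by omega)
    · intro h i hi; exact h i (by omega)
  rw [h0]
  apply isOpen_biInter_finset
  intro i _
  have h1 : {y : Bs | y i = x i} = (fun y : Bs => y i) ⁻¹' {x i} := rfl
  rw [h1]
  exact (continuous_apply i).isOpen_preimage _ (isOpen_discrete _)

lemma st_inter_eq_of_agree {f g : Bs} {n : ℕ} (h : ∀ i ≤ n, g i = f i) :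
    st g ∩ {k | k ≤ n} = st f ∩ {k | k ≤ n} := by
  ext x
  simp only [Set.mem_inter_iff, Set.mem_setOf_eq, st]
  constructor
  · rintro ⟨h1, h2⟩; exact ⟨by rw [← h x h2]; exact h1, h2⟩
  · rintro ⟨h1, h2⟩; exact ⟨by rw [h x h2]; exact h1, h2⟩

lemma level_closed (φ : Set ℕ → ℝ≥0∞) (m n : ℕ) :
    IsClosed {f : Bs | φ (st f ∩ {k | k ≤ n}) ≤ m} := by
  rw [← isOpen_compl_iff, isOpen_iff_mem_nhds]
  intro f hf
  rw [mem_nhds_iff]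
  refine ⟨{y : Bs | ∀ i ≤ n, y i = f i}, ?_, cyl_open f n, fun i _ => rfl⟩
  intro g hg
  simp only [Set.mem_compl_iff, Set.mem_setOf_eq] at hf ⊢
  rwa [st_inter_eq_of_agree hg]

/-! ### the backward direction -/

theorem backward (I : Set (Set ℕ)) (hI : IsIdeal I) (hfin : ContainsFin I)
    (φ : Set ℕ → ℝ≥0∞) (hφ : IsLSCSM φ) (hE : I = ExhPhi φ) (hF : I = FinPhi φ) :
    IsFsigma (chi '' I) ∧ IsPIdeal I := by
  obtain ⟨h0, hsub, hlsc⟩ := hφ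
  constructor
  · -- Fσ
    refine ⟨fun m => ⋂ n, {f : Bs | φ (st f ∩ {k | k ≤ n}) ≤ m}, ?_, ?_⟩
    · intro m
      exact isClosed_iInter fun n => level_closed φ m n
    · ext f
      simp only [Set.mem_iUnion, Set.mem_iInter, Set.mem_setOf_eq]
      constructor
      · rintro ⟨A, hA, rfl⟩
        have hAF : φ A < ⊤ := by rw [hF] at hA; exact hA
        obtain ⟨m, hm⟩ := ENNReal.exists_nat_gt hAF.ne
        refine ⟨m, fun n => ?_⟩
        rw [st_chi]
        exact le_trans (lscsm_mono hsub (Set.inter_subset_left)) hm.le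
      · rintro ⟨m, hm⟩
        have : φ (st f) ≤ m := by
          rw [lscsm_iSup hsub hlsc]
          exact iSup_le hm
        have hfI : st f ∈ I := by
          rw [hF]
          exact lt_of_le_of_lt this (by simp)
        exact ⟨st f, hfI, chi_st f⟩
  · -- P-ideal
    intro E hEI
    have hExh : ∀ n, Tendsto (fun j => φ (E n \ {k | k ≤ j})) atTop (nhds 0) := by
      intro n
      have := hEI n
      rw [hE] at this
      exact this
    have hpow : ∀ n : ℕ, (0:ℝ≥0∞) < 2⁻¹ ^ (n+1) := by
      intro n
      apply ENNReal.pow_pos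
      simp
    choose k hk using fun n => (ENNReal.tendsto_atTop_zero.mp (hExh n)) (2⁻¹ ^ (n+1)) (hpow n)
    set D : ℕ → Set ℕ := fun n => E n \ {j | j ≤ k n} with hD
    have hDb : ∀ n, φ (D n) ≤ 2⁻¹ ^ (n+1) := fun n => hk n (k n) le_rfl
    refine ⟨⋃ n, D n, ?_, ?_⟩
    · -- F ∈ I, via Exh
      rw [hE]
      rw [ExhPhi, Set.mem_setOf_eq, ENNReal.tendsto_atTop_zero]
      intro ε hε
      -- choose N1 with 2⁻¹^N1 < ε/2
      obtain ⟨N1, hN1⟩ := exists_inv_two_pow_lt (a := ε / 2) (by simp [ENNReal.div_eq_top, hε.ne'])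
      -- for n < N1 choose thresholds
      have hthr : ∀ n, ∃ jn, ∀ j ≥ jn, φ (E n \ {k | k ≤ j}) ≤ ε / 2 * 2⁻¹ ^ (n+1) := by
        intro n
        apply (ENNReal.tendsto_atTop_zero.mp (hExh n))
        have hd : (ε/2) ≠ 0 := by
          simp only [ne_eq, ENNReal.div_eq_zero_iff, not_or]
          exact ⟨hε.ne', ENNReal.ofNat_ne_top⟩
        exact ENNReal.mul_pos hd (hpow n).ne'
      choose jn hjn using hthr
      refine ⟨(Finset.range N1).sup jn, fun j hj => ?_⟩
      have hsplit : (⋃ n, D n) \ {k | k ≤ j} ⊆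
          (⋃ n ∈ Finset.range N1, (E n \ {k | k ≤ j})) ∪ (⋃ i, D (N1 + i)) := by
        intro x hx
        obtain ⟨n, hn⟩ := Set.mem_iUnion.mp hx.1
        have hxj := hx.2
        by_cases hcase : n < N1
        · left
          exact Set.mem_biUnion (Finset.mem_range.mpr hcase) ⟨hn.1, hxj⟩
        · right
          exact Set.mem_iUnion.mpr ⟨n - N1, by rwa [Nat.add_sub_cancel' (Nat.le_of_not_lt hcase)]⟩
      calc φ ((⋃ n, D n) \ {k | k ≤ j}) ≤
          φ ((⋃ n ∈ Finset.range N1, (E n \ {k | k ≤ j})) ∪ (⋃ i, D (N1 + i))) :=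
            lscsm_mono hsub hsplit
        _ ≤ φ (⋃ n ∈ Finset.range N1, (E n \ {k | k ≤ j})) + φ (⋃ i, D (N1 + i)) := (hsub _ _).2
        _ ≤ (∑ n ∈ Finset.range N1, φ (E n \ {k | k ≤ j})) + ∑' i, φ (D (N1 + i)) := by
            gcongr
            · exact lscsm_finsubadd h0 hsub _ _
            · exact lscsm_ctblsubadd h0 hsub hlsc _
        _ ≤ (∑ n ∈ Finset.range N1, ε / 2 * 2⁻¹ ^ (n+1)) + ∑' i, 2⁻¹ ^ (N1 + i + 1) := by
            gcongr with n hn i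
            · apply hjn
              exact le_trans (Finset.le_sup hn) hj
            · exact hDb (N1 + i)
        _ ≤ ε / 2 * (∑' n : ℕ, 2⁻¹ ^ (n+1)) + 2⁻¹ ^ N1 := by
            gcongr
            · rw [← ENNReal.tsum_mul_left]
              exact ENNReal.sum_le_tsum _
            · have h2 : ∑' i : ℕ, (2⁻¹:ℝ≥0∞) ^ (N1 + i + 1) =
                  2⁻¹ ^ (N1 + 1) * ∑' i : ℕ, (2⁻¹:ℝ≥0∞) ^ i := by
                rw [← ENNReal.tsum_mul_left]
                congr 1
                funext i
                rw [← pow_add]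
                congr 1
                omega
              rw [h2, tsum_geometric]
              have h3 : (1 - 2⁻¹ : ℝ≥0∞) = 2⁻¹ := by
                rw [ENNReal.one_sub_inv_two]
              rw [h3, pow_succ]
              rw [mul_assoc]
              rw [inv_inv]
              rw [ENNReal.inv_mul_cancel two_ne_zero ENNReal.ofNat_ne_top]
              rw [mul_one]
        _ ≤ ε / 2 * 1 + ε / 2 := by
            refine add_le_add (mul_le_mul_right ?_ (ε/2)) hN1.le
            have h2 : ∑' n : ℕ, (2⁻¹:ℝ≥0∞) ^ (n+1) = 2⁻¹ * ∑' n : ℕ, (2⁻¹:ℝ≥0∞) ^ n := by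
              rw [← ENNReal.tsum_mul_left]
              congr 1
              funext i
              rw [pow_succ, mul_comm]
            rw [h2, tsum_geometric, ENNReal.one_sub_inv_two, inv_inv,
              ENNReal.inv_mul_cancel two_ne_zero ENNReal.ofNat_ne_top]
        _ = ε := by rw [mul_one, ENNReal.add_halves]
    · intro n
      apply (Set.finite_Iic (k n)).subset
      intro x hx
      simp only [Set.mem_diff, Set.mem_iUnion, not_exists] at hx
      have := hx.2 n
      simp only [hD, Set.mem_diff, Set.mem_setOf_eq, not_and, not_not] at this
      exact this hx.1



/-! ### Forward direction: basic properties of the family `J = chi '' I` -/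

lemma st_j2 (f g : Bs) : st (j2 f g) = st f ∪ st g := by
  ext n; simp [st, j2]

@[simp] lemma st_bbot : st bbot = (∅ : Set ℕ) := by
  ext n; simp [st, bbot]

section Forward

variable {I : Set (Set ℕ)}

lemma J_hered (hI : IsIdeal I) {f g : Bs} (h : lee g f) (hf : f ∈ chi '' I) :
    g ∈ chi '' I := by
  rw [mem_chi_image] at hf ⊢
  exact hI.2.2.2 _ _ (lee_iff_subset.mp h) hf

lemma J_sup (hI : IsIdeal I) {f g : Bs} (hf : f ∈ chi '' I) (hg : g ∈ chi '' I) :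
    j2 f g ∈ chi '' I := by
  rw [mem_chi_image] at hf hg ⊢
  rw [st_j2]
  exact hI.2.2.1 _ _ hf hg

lemma J_tl (hI : IsIdeal I) {f : Bs} (hf : f ∈ chi '' I) (m : ℕ) : tl m f ∈ chi '' I :=
  J_hered hI (lee_tl m f) hf

lemma J_bot (hI : IsIdeal I) : bbot ∈ chi '' I := by
  rw [mem_chi_image, st_bbot]
  exact hI.1

/-! ### Baire boxes -/

lemma lee_closed (x : Bs) : IsClosed {f : Bs | lee f x} := by
  have h0 : {f : Bs | lee f x} = ⋂ n, {f : Bs | f n = true → x n = true} := by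
    ext f; simp [lee, Set.mem_iInter]
  rw [h0]
  apply isClosed_iInter
  intro n
  by_cases hx : x n = true
  · have : {f : Bs | f n = true → x n = true} = Set.univ := by
      ext f; simp [hx]
    rw [this]; exact isClosed_univ
  · have : {f : Bs | f n = true → x n = true} = (fun f : Bs => f n) ⁻¹' {false} := by
      ext f
      simp only [Set.mem_setOf_eq, Set.mem_preimage, Set.mem_singleton_iff]
      constructor
      · intro h
        cases hfn : f n
        · rfl
        · exact absurd (h hfn) hx
      · intro h h'
        rw [h] at h'; exact absurd h' (by simp)
    rw [this]
    exact IsClosed.preimage (continuous_apply n) (isClosed_discrete _)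

lemma baire_box {T : Set Bs} (hT : IsClosed T) (hne : T.Nonempty) (H : ℕ → Set Bs)
    (hH : ∀ m, IsClosed (H m)) (hcov : T ⊆ ⋃ m, H m) :
    ∃ m x k, x ∈ T ∧ ∀ y ∈ T, (∀ i ≤ k, y i = x i) → y ∈ H m := by
  haveI : CompactSpace T := isCompact_iff_compactSpace.mp hT.isCompact
  haveI : LocallyCompactSpace T := inferInstance
  haveI : Nonempty T := hne.to_subtype
  have hone : ∃ m, (interior ((Subtype.val : T → Bs) ⁻¹' H m)).Nonempty := by
    apply nonempty_interior_of_iUnion_of_closed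
    · intro m
      exact (hH m).preimage continuous_subtype_val
    · rw [← Set.preimage_iUnion]
      rw [Set.eq_univ_iff_forall]
      intro x
      exact hcov x.2
  obtain ⟨m, x0, hx0⟩ := hone
  have hop : IsOpen (interior ((Subtype.val : T → Bs) ⁻¹' H m)) := isOpen_interior
  obtain ⟨V, hV, hVeq⟩ := isOpen_induced_iff.mp hop
  have hx0V : (x0 : Bs) ∈ V := by
    rw [← hVeq] at hx0
    exact hx0
  obtain ⟨k, hk⟩ := exists_cyl_subset hV hx0V
  refine ⟨m, x0, k, x0.2, fun y hy hagree => ?_⟩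
  have h2 : (⟨y, hy⟩ : T) ∈ Subtype.val ⁻¹' V := hk y hagree
  rw [hVeq] at h2
  have h3 : (⟨y, hy⟩ : T) ∈ Subtype.val ⁻¹' H m := interior_subset h2
  exact h3

lemma baire_box2 {T : Set Bs} (hT : IsClosed T) (hne : T.Nonempty) (H : ℕ → Set (Bs × Bs))
    (hH : ∀ m, IsClosed (H m)) (hcov : T ×ˢ T ⊆ ⋃ m, H m) :
    ∃ m x y k, x ∈ T ∧ y ∈ T ∧ ∀ u v : Bs, u ∈ T → v ∈ T →
      (∀ i ≤ k, u i = x i) → (∀ i ≤ k, v i = y i) → (u, v) ∈ H m := by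
  have hTT : IsClosed (T ×ˢ T) := hT.prod hT
  haveI : CompactSpace (T ×ˢ T : Set (Bs × Bs)) := isCompact_iff_compactSpace.mp hTT.isCompact
  haveI : LocallyCompactSpace (T ×ˢ T : Set (Bs × Bs)) := inferInstance
  haveI : Nonempty (T ×ˢ T : Set (Bs × Bs)) := by
    obtain ⟨x, hx⟩ := hne
    exact ⟨⟨(x, x), hx, hx⟩⟩
  have hone : ∃ m, (interior ((Subtype.val : (T ×ˢ T : Set (Bs × Bs)) → Bs × Bs) ⁻¹' H m)).Nonempty := by
    apply nonempty_interior_of_iUnion_of_closed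
    · intro m
      exact (hH m).preimage continuous_subtype_val
    · rw [← Set.preimage_iUnion]
      rw [Set.eq_univ_iff_forall]
      intro x
      exact hcov x.2
  obtain ⟨m, x0, hx0⟩ := hone
  have hop : IsOpen (interior ((Subtype.val : (T ×ˢ T : Set (Bs × Bs)) → Bs × Bs) ⁻¹' H m)) :=
    isOpen_interior
  obtain ⟨V, hV, hVeq⟩ := isOpen_induced_iff.mp hop
  have hx0V : (x0 : Bs × Bs) ∈ V := by
    rw [← hVeq] at hx0
    exact hx0
  obtain ⟨k, hk⟩ := exists_cyl_subset_prod hV hx0V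
  refine ⟨m, (x0 : Bs × Bs).1, (x0 : Bs × Bs).2, k, x0.2.1, x0.2.2, fun u v hu hv hau hav => ?_⟩
  have huv : ((u, v) : Bs × Bs) ∈ T ×ˢ T := ⟨hu, hv⟩
  have h2 : (⟨(u, v), huv⟩ : (T ×ˢ T : Set (Bs × Bs))) ∈ Subtype.val ⁻¹' V := hk (u, v) hau hav
  rw [hVeq] at h2
  have h3 : (⟨(u, v), huv⟩ : (T ×ˢ T : Set (Bs × Bs))) ∈ Subtype.val ⁻¹' H m := interior_subset h2
  exact h3

/-! ### Mazur light : a tail-cofinal compact hereditary family -/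

def Gm (F : ℕ → Set Bs) (m : ℕ) : Set Bs := {g | ∃ y ∈ F m, lee g (j2 y (upto m))}

lemma m2_eq_left {f g : Bs} (h : lee f g) : m2 f g = f := by
  funext n
  cases hfn : f n
  · simp [m2, hfn]
  · simp [m2, hfn, h n hfn]

lemma lee_m2_right (f g : Bs) : lee (m2 f g) g := by
  intro n hn
  exact (m2_eq_true.mp hn).2

lemma Gm_closed {F : ℕ → Set Bs} (hcl : ∀ n, IsClosed (F n)) (m : ℕ) :
    IsClosed (Gm F m) := by
  have heq : Gm F m = (fun p : Bs × Bs => m2 p.2 (j2 p.1 (upto m))) '' (F m ×ˢ Set.univ) := by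
    ext g
    constructor
    · rintro ⟨y, hy, hlee⟩
      refine ⟨(y, g), ⟨hy, Set.mem_univ _⟩, ?_⟩
      exact m2_eq_left hlee
    · rintro ⟨⟨y, z⟩, ⟨hy, -⟩, rfl⟩
      exact ⟨y, hy, lee_m2_right _ _⟩
  rw [heq]
  apply IsCompact.isClosed
  apply IsCompact.image
  · exact ((hcl m).isCompact).prod isCompact_univ
  · exact cont_m2 (continuous_snd) (cont_j2 (continuous_fst) continuous_const)

lemma Gm_hered {F : ℕ → Set Bs} {m : ℕ} {f g : Bs} (h : lee g f) (hf : f ∈ Gm F m) :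
    g ∈ Gm F m := by
  obtain ⟨y, hy, hlee⟩ := hf
  exact ⟨y, hy, lee_trans h hlee⟩

lemma Gm_mono {F : ℕ → Set Bs} (hmono : ∀ a b, a ≤ b → F a ⊆ F b) {a b : ℕ} (hab : a ≤ b) :
    Gm F a ⊆ Gm F b := by
  rintro g ⟨y, hy, hlee⟩
  refine ⟨y, hmono a b hab hy, lee_trans hlee ?_⟩
  intro n hn
  rcases j2_eq_true.mp hn with h' | h'
  · simp [j2, h']
  · have : n ≤ b := le_trans (upto_eq_true.mp h') hab
    simp [j2, this]

lemma Gm_subJ (hI : IsIdeal I) (hfin : ContainsFin I) {F : ℕ → Set Bs}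
    (hsubJ : ∀ n, F n ⊆ chi '' I) (m : ℕ) : Gm F m ⊆ chi '' I := by
  rintro g ⟨y, hy, hlee⟩
  apply J_hered hI hlee
  apply J_sup hI (hsubJ m hy)
  rw [mem_chi_image]
  apply hfin
  apply (Set.finite_Iic m).subset
  intro x hx
  simpa [st] using hx

lemma L1 (hI : IsIdeal I) {F : ℕ → Set Bs} (hcl : ∀ n, IsClosed (F n))
    (hun : chi '' I = ⋃ n, F n) {A : Set ℕ} (hA : A ∈ I) :
    ∃ n k : ℕ, ∃ x : Bs, lee x (chi A) ∧
      ∀ f : Bs, lee f (chi A) → (∀ i ≤ k, f i = x i) → f ∈ F n := by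
  have hT : IsClosed {f : Bs | lee f (chi A)} := lee_closed (chi A)
  have hne : ({f : Bs | lee f (chi A)} : Set Bs).Nonempty := ⟨bbot, by intro n hn; simp at hn⟩
  have hcov : {f : Bs | lee f (chi A)} ⊆ ⋃ n, F n := by
    intro f hf
    rw [← hun, mem_chi_image]
    exact hI.2.2.2 _ _ (lee_iff_subset.mp hf) (by simpa using hA)
  obtain ⟨m, x, k, hx, hbox⟩ := baire_box hT hne F hcl hcov
  exact ⟨m, k, x, hx, fun f hf hagree => hbox f hf hagree⟩

lemma L2 (hI : IsIdeal I) {F : ℕ → Set Bs} (hcl : ∀ n, IsClosed (F n))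
    (hmono : ∀ a b, a ≤ b → F a ⊆ F b)
    (hun : chi '' I = ⋃ n, F n) {A : Set ℕ} (hA : A ∈ I) :
    ∃ m, ∀ f : Bs, lee f (chi A) → f ∈ Gm F m := by
  obtain ⟨n, k, x, hx, hL1⟩ := L1 hI hcl hun hA
  refine ⟨max n k, fun f hf => ?_⟩
  set y := j2 (trunc k x) (tl k f) with hy
  have hyA : lee y (chi A) := by
    apply j2_lee
    · exact lee_trans (lee_trunc k x) hx
    · exact lee_trans (lee_tl k f) hf
  have hagree : ∀ i ≤ k, y i = x i := by
    intro i hi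
    simp only [hy, j2, trunc, tl, hi, if_pos, if_neg (Nat.not_lt.mpr hi)]
    simp [hi]
  have hyF : y ∈ F n := hL1 y hyA hagree
  refine ⟨y, hmono n (max n k) (le_max_left _ _) hyF, ?_⟩
  intro i hfi
  by_cases hik : i ≤ k
  · apply j2_eq_true.mpr
    right
    simp [upto, le_trans hik (le_max_right n k)]
  · apply j2_eq_true.mpr
    left
    apply j2_eq_true.mpr
    right
    exact tl_eq_true.mpr ⟨Nat.not_le.mp hik, hfi⟩

lemma Mbound (hI : IsIdeal I) (hP : IsPIdeal I) {F : ℕ → Set Bs}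
    (hcl : ∀ n, IsClosed (F n)) (hmono : ∀ a b, a ≤ b → F a ⊆ F b)
    (hun : chi '' I = ⋃ n, F n) :
    ∃ M, ∀ f ∈ chi '' I, ∃ m, tl m f ∈ Gm F M := by
  by_contra hcon
  push_neg at hcon
  choose ff hffJ hffbad using hcon
  set E : ℕ → Set ℕ := fun M => st (ff M) with hE
  have hEI : ∀ M, E M ∈ I := fun M => mem_chi_image.mp (hffJ M)
  obtain ⟨Astar, hAstarI, hjunk⟩ := hP E hEI
  obtain ⟨mstar, hmstar⟩ := L2 hI hcl hmono hun hAstarI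
  obtain ⟨b, hb⟩ := (hjunk mstar).bddAbove
  apply hffbad mstar b
  apply hmstar
  intro n hn
  rw [chi_eq_true]
  rcases tl_eq_true.mp hn with ⟨hbn, hffn⟩
  by_cases hmem : n ∈ Astar
  · exact hmem
  · exfalso
    have : n ∈ E mstar \ Astar := ⟨by simpa [hE, st] using hffn, hmem⟩
    have := hb this
    omega

end Forward



/-! ### Good families, extendable patterns, and the halving lemma -/

@[simp] lemma j2_bbot_left (f : Bs) : j2 bbot f = f := by
  funext n; simp [j2, bbot]

@[simp] lemma j2_bbot_right (f : Bs) : j2 f bbot = f := by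
  funext n; simp [j2, bbot]

lemma trunc_eq_of_agree {f g : Bs} {k : ℕ} (h : ∀ i ≤ k, g i = f i) :
    trunc k g = trunc k f := by
  funext n
  by_cases hn : n ≤ k
  · simp [trunc, hn, h n hn]
  · simp [trunc, hn]

lemma lee_trunc_mono {f g : Bs} (k : ℕ) (h : lee g f) : lee (trunc k g) (trunc k f) := by
  intro n hn
  simp only [trunc] at hn ⊢
  by_cases hk : n ≤ k
  · simp only [hk, if_true] at hn ⊢
    exact h n hn
  · simp [hk] at hn

lemma truncCond_closed (S : Set Bs) (k : ℕ) : IsClosed {f : Bs | trunc k f ∈ S} := by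
  rw [← isOpen_compl_iff, isOpen_iff_mem_nhds]
  intro f hf
  rw [mem_nhds_iff]
  refine ⟨{y : Bs | ∀ i ≤ k, y i = f i}, ?_, cyl_open f k, fun i _ => rfl⟩
  intro g hg
  simp only [Set.mem_compl_iff, Set.mem_setOf_eq] at hf ⊢
  rwa [trunc_eq_of_agree hg]

section Half

variable {I : Set (Set ℕ)}

def Good (I : Set (Set ℕ)) (C : Set Bs) : Prop :=
  IsClosed C ∧ (∀ f g : Bs, lee g f → f ∈ C → g ∈ C) ∧
  (∀ f ∈ chi '' I, ∃ m, tl m f ∈ C) ∧ C ⊆ chi '' I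

def ExtE (I : Set (Set ℕ)) (C : Set Bs) : Set Bs :=
  {s | ∀ f ∈ chi '' I, ∃ m, j2 s (tl m f) ∈ C}

lemma ExtE_hered {C : Set Bs} (hC : Good I C) {s s' : Bs} (h : lee s' s)
    (hs : s ∈ ExtE I C) : s' ∈ ExtE I C := by
  intro f hf
  obtain ⟨m, hm⟩ := hs f hf
  refine ⟨m, hC.2.1 _ _ ?_ hm⟩
  intro n hn
  rcases j2_eq_true.mp hn with h1 | h1
  · exact j2_eq_true.mpr (Or.inl (h n h1))
  · exact j2_eq_true.mpr (Or.inr h1)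

lemma bbot_mem_ExtE {C : Set Bs} (hC : Good I C) : bbot ∈ ExtE I C := by
  intro f hf
  obtain ⟨m, hm⟩ := hC.2.2.1 f hf
  exact ⟨m, by rwa [j2_bbot_left]⟩

/-- The key uniformization lemma, using the P-ideal property. -/
lemma dagger (hI : IsIdeal I) (hP : IsPIdeal I) {C : Set Bs} (hC : Good I C) {s : Bs}
    (hs : s ∈ ExtE I C) {f : Bs} (hf : f ∈ chi '' I) :
    ∃ m, ∀ g ∈ chi '' I, ∃ m', j2 s (j2 (tl m f) (tl m' g)) ∈ C := by
  by_contra hcon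
  push_neg at hcon
  choose g hgJ hgbad using hcon
  obtain ⟨Z, hZI, hZjunk⟩ := hP (fun m => st (g m)) (fun m => mem_chi_image.mp (hgJ m))
  have hw : j2 f (chi Z) ∈ chi '' I := J_sup hI hf ⟨Z, hZI, rfl⟩
  obtain ⟨mbar, hmbar⟩ := hs _ hw
  obtain ⟨b, hb⟩ := (hZjunk mbar).bddAbove
  apply hgbad mbar (max mbar b)
  apply hC.2.1 _ _ ?_ hmbar
  intro n hn
  rcases j2_eq_true.mp hn with h1 | h1
  · exact j2_eq_true.mpr (Or.inl h1)
  · rcases j2_eq_true.mp h1 with h2 | h2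
    · rcases tl_eq_true.mp h2 with ⟨hlt, hfn⟩
      exact j2_eq_true.mpr (Or.inr (tl_eq_true.mpr ⟨hlt, j2_eq_true.mpr (Or.inl hfn)⟩))
    · rcases tl_eq_true.mp h2 with ⟨hlt, hgn⟩
      have hnZ : n ∈ Z := by
        by_contra hnz
        have hmem : n ∈ st (g mbar) \ Z := ⟨hgn, hnz⟩
        have := hb hmem
        omega
      refine j2_eq_true.mpr (Or.inr (tl_eq_true.mpr ⟨by omega, ?_⟩))
      exact j2_eq_true.mpr (Or.inr (chi_eq_true.mpr hnZ))

def CEs (I : Set (Set ℕ)) (C : Set Bs) : Set Bs :=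
  {f | f ∈ C ∧ ∀ k, trunc k f ∈ ExtE I C}

lemma CEs_closed {C : Set Bs} (hC : Good I C) : IsClosed (CEs I C) := by
  have h0 : CEs I C = C ∩ ⋂ k, {f : Bs | trunc k f ∈ ExtE I C} := by
    ext f; simp [CEs, Set.mem_iInter]
  rw [h0]
  exact hC.1.inter (isClosed_iInter fun k => truncCond_closed _ k)

lemma CEs_hered {C : Set Bs} (hC : Good I C) {f g : Bs} (h : lee g f) (hf : f ∈ CEs I C) :
    g ∈ CEs I C := by
  refine ⟨hC.2.1 _ _ h hf.1, fun k => ?_⟩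
  exact ExtE_hered hC (lee_trunc_mono k h) (hf.2 k)

lemma CEs_subJ {C : Set Bs} (hC : Good I C) : CEs I C ⊆ chi '' I :=
  fun _ hf => hC.2.2.2 hf.1

/-- Extendability into `CEs`. -/
lemma ext_absorb (hI : IsIdeal I) (hP : IsPIdeal I) {C : Set Bs} (hC : Good I C) {s : Bs}
    (hs : s ∈ ExtE I C) {f : Bs} (hf : f ∈ chi '' I) :
    ∃ m, j2 s (tl m f) ∈ CEs I C := by
  obtain ⟨m, hm⟩ := dagger hI hP hC hs hf
  refine ⟨m, ?_, ?_⟩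
  · have := hm bbot (J_bot hI)
    obtain ⟨m', hm'⟩ := this
    have heq : tl m' bbot = bbot := by funext n; simp [tl, bbot]
    rw [heq, j2_bbot_right] at hm'
    exact hm'
  · intro k
    intro g hg
    obtain ⟨m', hm'⟩ := hm g hg
    refine ⟨m', hC.2.1 _ _ ?_ hm'⟩
    intro n hn
    rcases j2_eq_true.mp hn with h1 | h1
    · have h2 : j2 s (tl m f) n = true := lee_trunc k _ n h1
      rcases j2_eq_true.mp h2 with h3 | h3
      · exact j2_eq_true.mpr (Or.inl h3)
      · exact j2_eq_true.mpr (Or.inr (j2_eq_true.mpr (Or.inl h3)))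
    · exact j2_eq_true.mpr (Or.inr (j2_eq_true.mpr (Or.inr h1)))

lemma CEs_tailcof (hI : IsIdeal I) (hP : IsPIdeal I) {C : Set Bs} (hC : Good I C) :
    ∀ f ∈ chi '' I, ∃ m, tl m f ∈ CEs I C := by
  intro f hf
  obtain ⟨m, hm⟩ := ext_absorb hI hP hC (bbot_mem_ExtE hC) hf
  rw [j2_bbot_left] at hm
  exact ⟨m, hm⟩

lemma bbot_mem_Good {C : Set Bs} (hC : Good I C) (hI : IsIdeal I) : bbot ∈ C := by
  obtain ⟨m, hm⟩ := hC.2.2.1 bbot (J_bot hI)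
  have heq : tl m bbot = bbot := by funext n; simp [tl, bbot]
  rwa [heq] at hm

lemma bbot_mem_CEs {C : Set Bs} (hC : Good I C) (hI : IsIdeal I) : bbot ∈ CEs I C := by
  refine ⟨bbot_mem_Good hC hI, fun k => ?_⟩
  have heq : trunc k bbot = bbot := by funext n; simp [trunc, bbot]
  rw [heq]
  exact bbot_mem_ExtE hC

/-- The halving lemma. -/
lemma half (hI : IsIdeal I) (hP : IsPIdeal I) {C : Set Bs} (hC : Good I C) :
    ∃ D : Set Bs, Good I D ∧ ∀ u v : Bs, u ∈ D → v ∈ D → j2 u v ∈ C := by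
  classical
  -- Baire on CEs × CEs
  set CE := CEs I C with hCE
  have hCEcl : IsClosed CE := CEs_closed hC
  have hCEne : CE.Nonempty := ⟨bbot, bbot_mem_CEs hC hI⟩
  set H : ℕ → Set (Bs × Bs) := fun m => {p | tl m (j2 p.1 p.2) ∈ C} with hH
  have hHcl : ∀ m, IsClosed (H m) := by
    intro m
    have : H m = (fun p : Bs × Bs => tl m (j2 p.1 p.2)) ⁻¹' C := rfl
    rw [this]
    exact hC.1.preimage ((cont_tl m).comp (cont_j2 continuous_fst continuous_snd))
  have hcov : CE ×ˢ CE ⊆ ⋃ m, H m := by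
    rintro ⟨u, v⟩ ⟨hu, hv⟩
    have : j2 u v ∈ chi '' I := J_sup hI (CEs_subJ hC hu) (CEs_subJ hC hv)
    obtain ⟨m, hm⟩ := hC.2.2.1 _ this
    exact Set.mem_iUnion.mpr ⟨m, hm⟩
  obtain ⟨m0, x, y, k, hx, hy, hbox⟩ := baire_box2 hCEcl hCEne H hHcl hcov
  set s := trunc k x with hs
  set t := trunc k y with ht
  have hsE : s ∈ ExtE I C := hx.2 k
  have htE : t ∈ ExtE I C := hy.2 k
  set K := max k m0 with hK
  set D : Set Bs :=
    {h | (∀ n ≤ K, h n = false) ∧ j2 s h ∈ CE ∧ j2 t h ∈ CE} with hD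
  have hDsubJ : D ⊆ chi '' I := by
    rintro h ⟨-, h1, -⟩
    exact J_hered hI (lee_j2_right s h) (CEs_subJ hC h1)
  refine ⟨D, ⟨?_, ?_, ?_, hDsubJ⟩, ?_⟩
  · -- closed
    have h0 : D = (⋂ n ∈ Finset.range (K+1), {h : Bs | h n = false}) ∩
        ((fun h => j2 s h) ⁻¹' CE ∩ (fun h => j2 t h) ⁻¹' CE) := by
      ext h
      simp only [hD, Set.mem_setOf_eq, Set.mem_inter_iff, Set.mem_iInter, Set.mem_preimage,
        Finset.mem_range]
      constructor
      · rintro ⟨h1, h2, h3⟩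
        exact ⟨fun n hn => h1 n (by omega), h2, h3⟩
      · rintro ⟨h1, h2, h3⟩
        exact ⟨fun n hn => h1 n (by omega), h2, h3⟩
    rw [h0]
    refine IsClosed.inter ?_ (IsClosed.inter ?_ ?_)
    · apply isClosed_biInter
      intro n _
      have h1 : {h : Bs | h n = false} = (fun h : Bs => h n) ⁻¹' {false} := rfl
      rw [h1]
      exact (isClosed_discrete _).preimage (continuous_apply n)
    · exact hCEcl.preimage (cont_j2 continuous_const continuous_id)
    · exact hCEcl.preimage (cont_j2 continuous_const continuous_id)
  · -- hereditary
    rintro f g hlee ⟨h1, h2, h3⟩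
    refine ⟨?_, ?_, ?_⟩
    · intro n hn
      cases hgn : g n
      · rfl
      · have := hlee n hgn
        rw [h1 n hn] at this
        exact absurd this (by simp)
    · apply CEs_hered hC ?_ h2
      intro n hn
      rcases j2_eq_true.mp hn with hh | hh
      · exact j2_eq_true.mpr (Or.inl hh)
      · exact j2_eq_true.mpr (Or.inr (hlee n hh))
    · apply CEs_hered hC ?_ h3
      intro n hn
      rcases j2_eq_true.mp hn with hh | hh
      · exact j2_eq_true.mpr (Or.inl hh)
      · exact j2_eq_true.mpr (Or.inr (hlee n hh))
  · -- tail-cofinal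
    intro f hf
    obtain ⟨m1, hm1⟩ := ext_absorb hI hP hC hsE hf
    obtain ⟨m2, hm2⟩ := ext_absorb hI hP hC htE hf
    set m := max (max m1 m2) K with hm
    refine ⟨m, ?_, ?_, ?_⟩
    · intro n hn
      simp only [tl]
      rw [if_pos (by omega)]
    · apply CEs_hered hC ?_ hm1
      intro n hn
      rcases j2_eq_true.mp hn with hh | hh
      · exact j2_eq_true.mpr (Or.inl hh)
      · rcases tl_eq_true.mp hh with ⟨hlt, hfn⟩
        exact j2_eq_true.mpr (Or.inr (tl_eq_true.mpr ⟨by omega, hfn⟩))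
    · apply CEs_hered hC ?_ hm2
      intro n hn
      rcases j2_eq_true.mp hn with hh | hh
      · exact j2_eq_true.mpr (Or.inl hh)
      · rcases tl_eq_true.mp hh with ⟨hlt, hfn⟩
        exact j2_eq_true.mpr (Or.inr (tl_eq_true.mpr ⟨by omega, hfn⟩))
  · -- pairing
    rintro u v ⟨hu0, hu1, -⟩ ⟨hv0, -, hv2⟩
    have hagreeu : ∀ i ≤ k, j2 s u i = x i := by
      intro i hi
      have : u i = false := hu0 i (le_trans hi (le_max_left _ _))
      simp [j2, this, hs, trunc, hi]
    have hagreev : ∀ i ≤ k, j2 t v i = y i := by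
      intro i hi
      have : v i = false := hv0 i (le_trans hi (le_max_left _ _))
      simp [j2, this, ht, trunc, hi]
    have hbox' : (j2 s u, j2 t v) ∈ H m0 := hbox _ _ hu1 hv2 hagreeu hagreev
    apply hC.2.1 _ _ ?_ hbox'
    intro n hn
    rcases j2_eq_true.mp hn with hh | hh
    · have hnK : ¬ n ≤ K := by
        intro hc
        rw [hu0 n hc] at hh
        exact absurd hh (by simp)
      refine tl_eq_true.mpr ⟨by omega, ?_⟩
      exact j2_eq_true.mpr (Or.inl (j2_eq_true.mpr (Or.inr hh)))
    · have hnK : ¬ n ≤ K := by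
        intro hc
        rw [hv0 n hc] at hh
        exact absurd hh (by simp)
      refine tl_eq_true.mpr ⟨by omega, ?_⟩
      exact j2_eq_true.mpr (Or.inr (j2_eq_true.mpr (Or.inr hh)))

end Half



/-! ### the tower of families -/

@[simp] lemma j2_self (f : Bs) : j2 f f = f := by
  funext n; simp [j2]

section Tower

variable {I : Set (Set ℕ)}

noncomputable def tw (hI : IsIdeal I) (hP : IsPIdeal I) {C0 : Set Bs} (hC0 : Good I C0) :
    ℕ → {C : Set Bs // Good I C} := fun n =>
  Nat.rec ⟨C0, hC0⟩ (fun _ p => ⟨(half hI hP p.2).choose, (half hI hP p.2).choose_spec.1⟩) n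

lemma tw_good (hI : IsIdeal I) (hP : IsPIdeal I) {C0 : Set Bs} (hC0 : Good I C0) (i : ℕ) :
    Good I (tw hI hP hC0 i).1 := (tw hI hP hC0 i).2

lemma tw_pair (hI : IsIdeal I) (hP : IsPIdeal I) {C0 : Set Bs} (hC0 : Good I C0) (i : ℕ) :
    ∀ u v : Bs, u ∈ (tw hI hP hC0 (i+1)).1 → v ∈ (tw hI hP hC0 (i+1)).1 →
      j2 u v ∈ (tw hI hP hC0 i).1 :=
  (half hI hP (tw hI hP hC0 i).2).choose_spec.2

lemma tw_sub (hI : IsIdeal I) (hP : IsPIdeal I) {C0 : Set Bs} (hC0 : Good I C0) (i : ℕ) :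
    (tw hI hP hC0 (i+1)).1 ⊆ (tw hI hP hC0 i).1 := by
  intro u hu
  have := tw_pair hI hP hC0 i u u hu hu
  rwa [j2_self] at this

lemma tw_le (hI : IsIdeal I) (hP : IsPIdeal I) {C0 : Set Bs} (hC0 : Good I C0)
    {i j : ℕ} (hij : i ≤ j) : (tw hI hP hC0 j).1 ⊆ (tw hI hP hC0 i).1 := by
  induction j with
  | zero => have : i = 0 := Nat.le_zero.mp hij; rw [this]
  | succ j ih =>
      rcases Nat.lt_or_ge i (j+1) with h | h
      · exact fun u hu => ih (by omega) (tw_sub hI hP hC0 j hu)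
      · have : i = j + 1 := by omega
        rw [this]

end Tower

/-! ### weights and the submeasure -/

def lsupP (L : List (ℕ × Bs)) : Bs := L.foldr (fun p acc => j2 p.2 acc) bbot

lemma lsupP_eq_true_iff {L : List (ℕ × Bs)} {n : ℕ} :
    lsupP L n = true ↔ ∃ p ∈ L, p.2 n = true := by
  induction L with
  | nil => simp [lsupP, bbot]
  | cons a t ih =>
      simp only [lsupP, List.foldr_cons] at *
      constructor
      · intro h
        rcases j2_eq_true.mp h with h1 | h1
        · exact ⟨a, List.mem_cons_self, h1⟩
        · obtain ⟨p, hp, hpn⟩ := ih.mp h1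
          exact ⟨p, List.mem_cons_of_mem a hp, hpn⟩
      · rintro ⟨p, hp, hpn⟩
        rcases List.mem_cons.mp hp with rfl | hp'
        · exact j2_eq_true.mpr (Or.inl hpn)
        · exact j2_eq_true.mpr (Or.inr (ih.mpr ⟨p, hp', hpn⟩))

def lsupY (Y : List Bs) : Bs := Y.foldr j2 bbot

lemma lsupY_eq_true_iff {Y : List Bs} {n : ℕ} :
    lsupY Y n = true ↔ ∃ y ∈ Y, y n = true := by
  induction Y with
  | nil => simp [lsupY, bbot]
  | cons a t ih =>
      simp only [lsupY, List.foldr_cons] at *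
      constructor
      · intro h
        rcases j2_eq_true.mp h with h1 | h1
        · exact ⟨a, List.mem_cons_self, h1⟩
        · obtain ⟨y, hy, hyn⟩ := ih.mp h1
          exact ⟨y, List.mem_cons_of_mem a hy, hyn⟩
      · rintro ⟨y, hy, hyn⟩
        rcases List.mem_cons.mp hy with rfl | hy'
        · exact j2_eq_true.mpr (Or.inl hyn)
        · exact j2_eq_true.mpr (Or.inr (ih.mpr ⟨y, hy', hyn⟩))

noncomputable def lcost (L : List (ℕ × Bs)) : ℝ≥0∞ :=
  (L.map fun p => (2 : ℝ≥0∞)⁻¹ ^ p.1).sum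

lemma lcost_append (L1 L2 : List (ℕ × Bs)) : lcost (L1 ++ L2) = lcost L1 + lcost L2 := by
  simp [lcost]

def LOK (Cs : ℕ → Set Bs) (L : List (ℕ × Bs)) : Prop := ∀ p ∈ L, 1 ≤ p.1 ∧ p.2 ∈ Cs p.1

noncomputable def wgt (Cs : ℕ → Set Bs) (F : Finset ℕ) : ℝ≥0∞ :=
  sInf {r | ∃ P : Finset ℕ, ∃ L : List (ℕ × Bs), LOK Cs L ∧
    (∀ n ∈ F, n ∈ P ∨ lsupP L n = true) ∧ r = P.card + lcost L}

lemma wgt_le_of {Cs : ℕ → Set Bs} {F P : Finset ℕ} {L : List (ℕ × Bs)} (hL : LOK Cs L)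
    (hcov : ∀ n ∈ F, n ∈ P ∨ lsupP L n = true) : wgt Cs F ≤ P.card + lcost L :=
  sInf_le ⟨P, L, hL, hcov, rfl⟩

lemma wgt_le_card (Cs : ℕ → Set Bs) (F : Finset ℕ) : wgt Cs F ≤ F.card := by
  have := wgt_le_of (Cs := Cs) (F := F) (P := F) (L := []) (by intro p hp; simp at hp)
    (by intro n hn; exact Or.inl hn)
  simpa [lcost] using this

lemma wgt_mono {Cs : ℕ → Set Bs} {F F' : Finset ℕ} (h : F ⊆ F') : wgt Cs F ≤ wgt Cs F' := by
  apply le_sInf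
  rintro r ⟨P, L, hL, hcov, rfl⟩
  exact wgt_le_of hL fun n hn => hcov n (h hn)

lemma wgt_empty (Cs : ℕ → Set Bs) : wgt Cs ∅ = 0 := by
  have := wgt_le_card Cs ∅
  simpa using this

lemma wgt_subadd {Cs : ℕ → Set Bs} {F F1 F2 : Finset ℕ} (h : ∀ n ∈ F, n ∈ F1 ∨ n ∈ F2) :
    wgt Cs F ≤ wgt Cs F1 + wgt Cs F2 := by
  rcases eq_or_ne (wgt Cs F1) ⊤ with h1 | h1
  · rw [h1, top_add]; exact le_top
  rcases eq_or_ne (wgt Cs F2) ⊤ with h2 | h2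
  · rw [h2, add_top]; exact le_top
  apply ENNReal.le_of_forall_pos_le_add
  intro ε hε _
  have hε2 : (0:ℝ≥0∞) < (ε:ℝ≥0∞) / 2 := by
    apply ENNReal.div_pos (by exact_mod_cast hε.ne') ENNReal.ofNat_ne_top
  have hlt1 : wgt Cs F1 < wgt Cs F1 + ε/2 :=
    ENNReal.lt_add_right h1 hε2.ne'
  have hlt2 : wgt Cs F2 < wgt Cs F2 + ε/2 :=
    ENNReal.lt_add_right h2 hε2.ne'
  obtain ⟨r1, ⟨P1, L1, hL1, hcov1, rfl⟩, hr1⟩ := sInf_lt_iff.mp hlt1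
  obtain ⟨r2, ⟨P2, L2, hL2, hcov2, rfl⟩, hr2⟩ := sInf_lt_iff.mp hlt2
  have hLOK : LOK Cs (L1 ++ L2) := by
    intro p hp
    rcases List.mem_append.mp hp with hp' | hp'
    · exact hL1 p hp'
    · exact hL2 p hp'
  have hcov : ∀ n ∈ F, n ∈ P1 ∪ P2 ∨ lsupP (L1 ++ L2) n = true := by
    intro n hn
    rcases h n hn with hn' | hn'
    · rcases hcov1 n hn' with hc | hc
      · exact Or.inl (Finset.mem_union_left _ hc)
      · refine Or.inr (lsupP_eq_true_iff.mpr ?_)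
        obtain ⟨p, hp, hpn⟩ := lsupP_eq_true_iff.mp hc
        exact ⟨p, List.mem_append_left _ hp, hpn⟩
    · rcases hcov2 n hn' with hc | hc
      · exact Or.inl (Finset.mem_union_right _ hc)
      · refine Or.inr (lsupP_eq_true_iff.mpr ?_)
        obtain ⟨p, hp, hpn⟩ := lsupP_eq_true_iff.mp hc
        exact ⟨p, List.mem_append_right _ hp, hpn⟩
  calc wgt Cs F ≤ (P1 ∪ P2).card + lcost (L1 ++ L2) := wgt_le_of hLOK hcov
    _ ≤ (P1.card + P2.card : ℕ) + (lcost L1 + lcost L2) := by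
        rw [lcost_append]
        gcongr
        exact_mod_cast Finset.card_union_le P1 P2
    _ = (↑P1.card + lcost L1) + (↑P2.card + lcost L2) := by push_cast; ring
    _ ≤ (wgt Cs F1 + ε/2) + (wgt Cs F2 + ε/2) := by
        exact add_le_add hr1.le hr2.le
    _ = wgt Cs F1 + wgt Cs F2 + ε := by
        have hh : (ε:ℝ≥0∞)/2 + (ε:ℝ≥0∞)/2 = (ε:ℝ≥0∞) := ENNReal.add_halves _
        calc wgt Cs F1 + ↑ε / 2 + (wgt Cs F2 + ↑ε / 2)
            = wgt Cs F1 + wgt Cs F2 + ((ε:ℝ≥0∞)/2 + (ε:ℝ≥0∞)/2) := by ring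
          _ = wgt Cs F1 + wgt Cs F2 + ε := by rw [hh]

noncomputable def phiW (Cs : ℕ → Set Bs) (A : Set ℕ) : ℝ≥0∞ :=
  ⨆ (F : Finset ℕ) (_ : ↑F ⊆ A), wgt Cs F

lemma phiW_mono {Cs : ℕ → Set Bs} {A B : Set ℕ} (h : A ⊆ B) : phiW Cs A ≤ phiW Cs B := by
  apply iSup_le
  intro F
  apply iSup_le
  intro hF
  exact le_iSup₂ (f := fun (F : Finset ℕ) (_ : ↑F ⊆ B) => wgt Cs F) F (hF.trans h)

lemma wgt_le_phiW {Cs : ℕ → Set Bs} {A : Set ℕ} {F : Finset ℕ} (h : ↑F ⊆ A) :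
    wgt Cs F ≤ phiW Cs A :=
  le_iSup₂ (f := fun (F : Finset ℕ) (_ : ↑F ⊆ A) => wgt Cs F) F h

lemma phiW_empty (Cs : ℕ → Set Bs) : phiW Cs ∅ = 0 := by
  apply le_antisymm _ zero_le
  apply iSup_le
  intro F
  apply iSup_le
  intro hF
  have : F = ∅ := by
    apply Finset.eq_empty_of_forall_notMem
    intro x hx
    exact absurd (hF hx) (Set.notMem_empty x)
  rw [this, wgt_empty]

lemma phiW_subadd (Cs : ℕ → Set Bs) (A B : Set ℕ) :
    phiW Cs (A ∪ B) ≤ phiW Cs A + phiW Cs B := by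
  classical
  apply iSup_le
  intro F
  apply iSup_le
  intro hF
  set F1 := F.filter (fun n => n ∈ A) with hF1
  set F2 := F.filter (fun n => n ∉ A) with hF2
  have hsplit : ∀ n ∈ F, n ∈ F1 ∨ n ∈ F2 := by
    intro n hn
    by_cases hA : n ∈ A
    · exact Or.inl (Finset.mem_filter.mpr ⟨hn, hA⟩)
    · exact Or.inr (Finset.mem_filter.mpr ⟨hn, hA⟩)
  have h1 : (↑F1 : Set ℕ) ⊆ A := by
    intro n hn
    exact (Finset.mem_filter.mp hn).2
  have h2 : (↑F2 : Set ℕ) ⊆ B := by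
    intro n hn
    have h3 := Finset.mem_filter.mp hn
    rcases hF (h3.1) with h | h
    · exact absurd h h3.2
    · exact h
  calc wgt Cs F ≤ wgt Cs F1 + wgt Cs F2 := wgt_subadd hsplit
    _ ≤ phiW Cs A + phiW Cs B := add_le_add (wgt_le_phiW h1) (wgt_le_phiW h2)

lemma phiW_iSup (Cs : ℕ → Set Bs) (A : Set ℕ) :
    phiW Cs A = ⨆ n, phiW Cs (A ∩ {k | k ≤ n}) := by
  apply le_antisymm
  · apply iSup_le
    intro F
    apply iSup_le
    intro hF
    rcases F.eq_empty_or_nonempty with rfl | hne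
    · rw [wgt_empty]; exact zero_le
    · have hFsub : (↑F : Set ℕ) ⊆ A ∩ {k | k ≤ F.max' hne} := by
        intro x hx
        exact ⟨hF hx, Finset.le_max' F x hx⟩
      calc wgt Cs F ≤ phiW Cs (A ∩ {k | k ≤ F.max' hne}) := wgt_le_phiW hFsub
        _ ≤ ⨆ n, phiW Cs (A ∩ {k | k ≤ n}) :=
            le_iSup (fun n => phiW Cs (A ∩ {k | k ≤ n})) (F.max' hne)
  · apply iSup_le
    intro n
    exact phiW_mono (Set.inter_subset_left)

lemma phiW_lsc (Cs : ℕ → Set Bs) (A : Set ℕ) :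
    Tendsto (fun n => phiW Cs (A ∩ {k | k ≤ n})) atTop (nhds (phiW Cs A)) := by
  rw [phiW_iSup Cs A]
  apply tendsto_atTop_iSup
  intro a b hab
  exact phiW_mono (by intro x hx; exact ⟨hx.1, le_trans hx.2 hab⟩)

lemma phiW_lscsm (Cs : ℕ → Set Bs) : IsLSCSM (phiW Cs) := by
  refine ⟨phiW_empty Cs, fun A B => ⟨phiW_mono Set.subset_union_left, phiW_subadd Cs A B⟩,
    phiW_lsc Cs⟩

/-! ### the exhaustive side -/

lemma chiF_le_tl {A : Set ℕ} {m : ℕ} {F : Finset ℕ} (hF : ↑F ⊆ A \ {k | k ≤ m}) :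
    lee (chi ↑F) (tl m (chi A)) := by
  intro n hn
  have hnF : n ∈ F := by
    rw [chi_eq_true] at hn
    exact_mod_cast hn
  have h2 := hF hnF
  refine tl_eq_true.mpr ⟨?_, chi_eq_true.mpr h2.1⟩
  have := h2.2
  simp only [Set.mem_setOf_eq] at this
  omega

lemma phiW_tail_small {Cs : ℕ → Set Bs} {i : ℕ} (hi : 1 ≤ i)
    (hher : ∀ f g : Bs, lee g f → f ∈ Cs i → g ∈ Cs i)
    {A : Set ℕ} {m : ℕ} (hm : tl m (chi A) ∈ Cs i) {n : ℕ} (hn : m ≤ n) :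
    phiW Cs (A \ {k | k ≤ n}) ≤ (2 : ℝ≥0∞)⁻¹ ^ i := by
  apply iSup_le
  intro F
  apply iSup_le
  intro hF
  have hF' : ↑F ⊆ A \ {k | k ≤ m} := by
    intro x hx
    have h2 := hF hx
    refine ⟨h2.1, ?_⟩
    have := h2.2
    simp only [Set.mem_setOf_eq] at this ⊢
    omega
  have hFC : chi ↑F ∈ Cs i := hher _ _ (chiF_le_tl hF') hm
  have := wgt_le_of (F := F) (P := ∅) (L := [(i, chi ↑F)])
    (by
      intro p hp
      simp only [List.mem_singleton] at hp
      subst hp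
      exact ⟨hi, hFC⟩)
    (by
      intro x hx
      right
      apply lsupP_eq_true_iff.mpr
      exact ⟨(i, chi ↑F), List.mem_singleton_self _, chi_eq_true.mpr (by exact_mod_cast hx)⟩)
  simpa [lcost] using this



/-! ### merging covers -/

def pairUp : List Bs → List Bs
  | [] => []
  | [x] => [j2 x x]
  | x :: y :: t => j2 x y :: pairUp t

lemma pairUp_class {C D : Set Bs} (hCD : ∀ u v : Bs, u ∈ C → v ∈ C → j2 u v ∈ D) :
    ∀ l : List Bs, (∀ x ∈ l, x ∈ C) → ∀ y ∈ pairUp l, y ∈ D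
  | [] => by intro _ y hy; simp [pairUp] at hy
  | [x] => by
      intro h y hy
      simp only [pairUp, List.mem_singleton] at hy
      subst hy
      exact hCD x x (h x (by simp)) (h x (by simp))
  | x :: y :: t => by
      intro h z hz
      simp only [pairUp, List.mem_cons] at hz
      rcases hz with rfl | hz
      · exact hCD x y (h x (by simp)) (h y (by simp))
      · exact pairUp_class hCD t (fun a ha => h a (by simp [ha])) z hz

lemma pairUp_cover : ∀ (l : List Bs), ∀ x ∈ l, ∃ y ∈ pairUp l, lee x y
  | [] => by intro x hx; simp at hx
  | [x] => by
      intro z hz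
      simp only [List.mem_singleton] at hz
      subst hz
      exact ⟨j2 z z, by simp [pairUp], lee_j2_left z z⟩
  | x :: y :: t => by
      intro z hz
      simp only [List.mem_cons] at hz
      rcases hz with rfl | rfl | hz
      · exact ⟨j2 z y, by simp [pairUp], lee_j2_left z y⟩
      · exact ⟨j2 x z, by simp [pairUp], lee_j2_right x z⟩
      · obtain ⟨w, hw, hlw⟩ := pairUp_cover t z hz
        exact ⟨w, by simp [pairUp, hw], hlw⟩

lemma pairUp_length : ∀ l : List Bs, (pairUp l).length = (l.length + 1) / 2
  | [] => by simp [pairUp]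
  | [x] => by simp [pairUp]
  | x :: y :: t => by
      simp only [pairUp, List.length_cons, pairUp_length t]
      omega

lemma lcost_split (q : ℕ × Bs → Bool) :
    ∀ L : List (ℕ × Bs), lcost L = lcost (L.filter q) + lcost (L.filter fun p => !q p) := by
  intro L
  induction L with
  | nil => simp [lcost]
  | cons a t ih =>
      by_cases hq : q a = true
      · simp only [List.filter_cons, hq, if_true, Bool.not_eq_true', hq]
        simp only [lcost, List.map_cons, List.sum_cons] at *
        rw [ih]
        have : (!q a) = false := by simp [hq]
        simp [this]
        ring
      · simp only [Bool.not_eq_true] at hq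
        simp only [List.filter_cons, hq]
        simp only [lcost, List.map_cons, List.sum_cons] at *
        rw [ih]
        have : (!q a) = true := by simp [hq]
        simp [this, hq]
        ring

lemma lcost_const_level {L : List (ℕ × Bs)} {i : ℕ} (h : ∀ p ∈ L, p.1 = i) :
    lcost L = L.length * (2:ℝ≥0∞)⁻¹ ^ i := by
  induction L with
  | nil => simp [lcost]
  | cons a t ih =>
      have ht : lcost t = t.length * (2:ℝ≥0∞)⁻¹ ^ i := ih (fun p hp => h p (by simp [hp]))
      have hs : lcost (a :: t) = (2:ℝ≥0∞)⁻¹ ^ a.1 + lcost t := by simp [lcost]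
      rw [hs, h a (by simp), ht, List.length_cons]
      push_cast
      ring

lemma two_inv_pow_succ (d : ℕ) : (2:ℝ≥0∞)⁻¹ ^ d = 2 * (2:ℝ≥0∞)⁻¹ ^ (d+1) := by
  rw [pow_succ, ← mul_assoc, mul_comm (2:ℝ≥0∞) ((2:ℝ≥0∞)⁻¹ ^ d), mul_assoc,
    ENNReal.mul_inv_cancel two_ne_zero ENNReal.ofNat_ne_top, mul_one]

lemma merge_main {Cs : ℕ → Set Bs}
    (hpair : ∀ i, ∀ u v : Bs, u ∈ Cs (i+1) → v ∈ Cs (i+1) → j2 u v ∈ Cs i) :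
    ∀ d (L : List (ℕ × Bs)), LOK Cs L → (∀ p ∈ L, p.1 ≤ d) →
    ∃ Y : List Bs, (∀ y ∈ Y, y ∈ Cs 1) ∧
      (∀ n, lsupP L n = true → lsupY Y n = true) ∧
      (Y.length : ℝ≥0∞) * 2⁻¹ + (2:ℝ≥0∞)⁻¹ ^ d ≤ lcost L + 1 := by
  intro d
  induction d with
  | zero =>
      intro L hLOK hbd
      have hnil : L = [] := by
        cases L with
        | nil => rfl
        | cons a t =>
            exfalso
            have h1 := (hLOK a (by simp)).1
            have h2 := hbd a (by simp)
            omega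
      subst hnil
      refine ⟨[], by simp, ?_, ?_⟩
      · intro n hn
        simp [lsupP, bbot] at hn
      · simp [lcost, lsupY]
  | succ d ih =>
      intro L hLOK hbd
      by_cases hd : d = 0
      · -- all levels are 1
        subst hd
        refine ⟨L.map Prod.snd, ?_, ?_, ?_⟩
        · intro y hy
          obtain ⟨p, hp, rfl⟩ := List.mem_map.mp hy
          have h1 := (hLOK p hp).2
          have h2 := (hLOK p hp).1
          have h3 := hbd p hp
          have : p.1 = 1 := by omega
          rwa [this] at h1
        · intro n hn
          obtain ⟨p, hp, hpn⟩ := lsupP_eq_true_iff.mp hn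
          exact lsupY_eq_true_iff.mpr ⟨p.2, List.mem_map.mpr ⟨p, hp, rfl⟩, hpn⟩
        · have hc : lcost L = L.length * (2:ℝ≥0∞)⁻¹ ^ 1 := by
            apply lcost_const_level
            intro p hp
            have h2 := (hLOK p hp).1
            have h3 := hbd p hp
            omega
          rw [hc, List.length_map, pow_one]
          have h4 : ((2:ℝ≥0∞)⁻¹ : ℝ≥0∞) ≤ 1 := ENNReal.inv_le_one.mpr (by norm_num)
          exact add_le_add le_rfl h4
      · -- reduce level d+1 pieces
        classical
        set q : ℕ × Bs → Bool := fun p => decide (p.1 = d+1) with hq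
        set Lt := L.filter q with hLt
        set Lr := L.filter (fun p => !q p) with hLr
        set Lp := (pairUp (Lt.map Prod.snd)).map (fun y => (d, y)) with hLp
        set L' := Lr ++ Lp with hL'
        have hmemLt : ∀ p ∈ Lt, p ∈ L ∧ p.1 = d + 1 := by
          intro p hp
          have := List.mem_filter.mp hp
          exact ⟨this.1, by simpa [hq] using this.2⟩
        have hmemLr : ∀ p ∈ Lr, p ∈ L ∧ p.1 ≠ d + 1 := by
          intro p hp
          have := List.mem_filter.mp hp
          refine ⟨this.1, ?_⟩
          have h2 := this.2
          simp only [hq, Bool.not_eq_true', decide_eq_false_iff_not] at h2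
          exact h2
        have hLtClass : ∀ x ∈ Lt.map Prod.snd, x ∈ Cs (d+1) := by
          intro x hx
          obtain ⟨p, hp, rfl⟩ := List.mem_map.mp hx
          have h1 := hmemLt p hp
          have h2 := (hLOK p h1.1).2
          rwa [h1.2] at h2
        have hLOK' : LOK Cs L' := by
          intro p hp
          rcases List.mem_append.mp hp with hp' | hp'
          · exact hLOK p (hmemLr p hp').1
          · obtain ⟨y, hy, rfl⟩ := List.mem_map.mp hp'
            refine ⟨by omega, ?_⟩
            exact pairUp_class (hpair d) _ hLtClass y hy
        have hbd' : ∀ p ∈ L', p.1 ≤ d := by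
          intro p hp
          rcases List.mem_append.mp hp with hp' | hp'
          · have h1 := hmemLr p hp'
            have h2 := hbd p h1.1
            omega
          · obtain ⟨y, hy, rfl⟩ := List.mem_map.mp hp'
            exact le_rfl
        obtain ⟨Y, hY1, hY2, hY3⟩ := ih L' hLOK' hbd'
        refine ⟨Y, hY1, ?_, ?_⟩
        · intro n hn
          obtain ⟨p, hp, hpn⟩ := lsupP_eq_true_iff.mp hn
          apply hY2
          apply lsupP_eq_true_iff.mpr
          by_cases hlev : p.1 = d + 1
          · have hpLt : p ∈ Lt := by
              rw [hLt]
              exact List.mem_filter.mpr ⟨hp, by simp [hq, hlev]⟩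
            obtain ⟨y, hy, hly⟩ := pairUp_cover (Lt.map Prod.snd) p.2
              (List.mem_map.mpr ⟨p, hpLt, rfl⟩)
            refine ⟨(d, y), ?_, hly n hpn⟩
            rw [hL']
            exact List.mem_append_right _ (List.mem_map.mpr ⟨y, hy, rfl⟩)
          · have hpLr : p ∈ Lr := by
              rw [hLr]
              exact List.mem_filter.mpr ⟨hp, by simp [hq, hlev]⟩
            refine ⟨p, ?_, hpn⟩
            rw [hL']
            exact List.mem_append_left _ hpLr
        · -- cost accounting
          set nt := Lt.length with hnt
          have hcostL : lcost L = lcost Lr + nt * (2:ℝ≥0∞)⁻¹ ^ (d+1) := by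
            rw [lcost_split q L]
            have h1 : lcost Lt = nt * (2:ℝ≥0∞)⁻¹ ^ (d+1) := by
              apply lcost_const_level
              intro p hp
              exact (hmemLt p hp).2
            rw [← hLt, ← hLr, h1]
            ring
          have hcostLp : lcost Lp = (((nt + 1) / 2 : ℕ) : ℝ≥0∞) * (2:ℝ≥0∞)⁻¹ ^ d := by
            have h1 : lcost Lp = Lp.length * (2:ℝ≥0∞)⁻¹ ^ d := by
              apply lcost_const_level
              intro p hp
              obtain ⟨y, hy, rfl⟩ := List.mem_map.mp hp
              rfl
            rw [h1, hLp, List.length_map, pairUp_length, List.length_map, hnt]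
          have hcostL' : lcost L' = lcost Lr + (((nt + 1) / 2 : ℕ) : ℝ≥0∞) * (2:ℝ≥0∞)⁻¹ ^ d := by
            rw [hL', lcost_append, hcostLp]
          -- key numeric inequality
          have hkey : lcost L' + (2:ℝ≥0∞)⁻¹ ^ (d+1) ≤ lcost L + (2:ℝ≥0∞)⁻¹ ^ d := by
            rw [hcostL, hcostL']
            have h2 : (((nt + 1) / 2 : ℕ) : ℝ≥0∞) * (2:ℝ≥0∞)⁻¹ ^ d + (2:ℝ≥0∞)⁻¹ ^ (d+1) ≤
                (nt : ℝ≥0∞) * (2:ℝ≥0∞)⁻¹ ^ (d+1) + (2:ℝ≥0∞)⁻¹ ^ d := by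
              rw [two_inv_pow_succ d]
              have hnat : ((nt + 1) / 2 : ℕ) * 2 + 1 ≤ nt + 2 := by omega
              calc (((nt + 1) / 2 : ℕ) : ℝ≥0∞) * (2 * (2:ℝ≥0∞)⁻¹ ^ (d+1)) + (2:ℝ≥0∞)⁻¹ ^ (d+1)
                  = ((((nt + 1) / 2 : ℕ) : ℝ≥0∞) * 2 + 1) * (2:ℝ≥0∞)⁻¹ ^ (d+1) := by ring
                _ ≤ ((nt : ℝ≥0∞) + 2) * (2:ℝ≥0∞)⁻¹ ^ (d+1) := by
                    apply mul_le_mul_left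
                    calc (((nt + 1) / 2 : ℕ) : ℝ≥0∞) * 2 + 1
                        = ((((nt + 1) / 2 : ℕ) * 2 + 1 : ℕ) : ℝ≥0∞) := by push_cast; ring
                      _ ≤ ((nt + 2 : ℕ) : ℝ≥0∞) := by exact_mod_cast hnat
                      _ = (nt : ℝ≥0∞) + 2 := by push_cast; ring
                _ = (nt : ℝ≥0∞) * (2:ℝ≥0∞)⁻¹ ^ (d+1) + 2 * (2:ℝ≥0∞)⁻¹ ^ (d+1) := by ring
            calc lcost Lr + (((nt + 1) / 2 : ℕ) : ℝ≥0∞) * (2:ℝ≥0∞)⁻¹ ^ d + (2:ℝ≥0∞)⁻¹ ^ (d+1)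
                = lcost Lr + ((((nt + 1) / 2 : ℕ) : ℝ≥0∞) * (2:ℝ≥0∞)⁻¹ ^ d +
                    (2:ℝ≥0∞)⁻¹ ^ (d+1)) := by ring
              _ ≤ lcost Lr + ((nt : ℝ≥0∞) * (2:ℝ≥0∞)⁻¹ ^ (d+1) + (2:ℝ≥0∞)⁻¹ ^ d) :=
                  add_le_add le_rfl h2
              _ = lcost Lr + (nt : ℝ≥0∞) * (2:ℝ≥0∞)⁻¹ ^ (d+1) + (2:ℝ≥0∞)⁻¹ ^ d := by ring
          -- conclude
          have hfin1 : (2:ℝ≥0∞)⁻¹ ^ d ≠ ⊤ := by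
            apply ENNReal.pow_ne_top
            simp
          have h5 : (Y.length : ℝ≥0∞) * 2⁻¹ + (2:ℝ≥0∞)⁻¹ ^ (d+1) + (2:ℝ≥0∞)⁻¹ ^ d ≤
              lcost L + 1 + (2:ℝ≥0∞)⁻¹ ^ d := by
            calc (Y.length : ℝ≥0∞) * 2⁻¹ + (2:ℝ≥0∞)⁻¹ ^ (d+1) + (2:ℝ≥0∞)⁻¹ ^ d
                = ((Y.length : ℝ≥0∞) * 2⁻¹ + (2:ℝ≥0∞)⁻¹ ^ d) + (2:ℝ≥0∞)⁻¹ ^ (d+1) := by ring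
              _ ≤ (lcost L' + 1) + (2:ℝ≥0∞)⁻¹ ^ (d+1) := add_le_add hY3 le_rfl
              _ = (lcost L' + (2:ℝ≥0∞)⁻¹ ^ (d+1)) + 1 := by ring
              _ ≤ (lcost L + (2:ℝ≥0∞)⁻¹ ^ d) + 1 := add_le_add hkey le_rfl
              _ = lcost L + 1 + (2:ℝ≥0∞)⁻¹ ^ d := by ring
          rwa [ENNReal.add_le_add_iff_right hfin1] at h5



/-! ### the compact witness class for the Fin side -/

def psmall (N : ℕ) : Set Bs := {p | ∀ F : Finset ℕ, (∀ i ∈ F, p i = true) → F.card ≤ N}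

lemma psmall_closed (N : ℕ) : IsClosed (psmall N) := by
  have h0 : psmall N = ⋂ F : Finset ℕ, {p : Bs | (∀ i ∈ F, p i = true) → F.card ≤ N} := by
    ext p; simp [psmall, Set.mem_iInter]
  rw [h0]
  apply isClosed_iInter
  intro F
  by_cases hF : F.card ≤ N
  · have : {p : Bs | (∀ i ∈ F, p i = true) → F.card ≤ N} = Set.univ := by
      ext p; simp [hF]
    rw [this]; exact isClosed_univ
  · have : {p : Bs | (∀ i ∈ F, p i = true) → F.card ≤ N} =
        (⋂ i ∈ F, {p : Bs | p i = true})ᶜ := by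
      ext p
      simp only [Set.mem_setOf_eq, Set.mem_compl_iff, Set.mem_iInter]
      constructor
      · intro h hc
        exact hF (h hc)
      · intro h hc
        exact absurd hc h
    rw [this]
    apply IsOpen.isClosed_compl
    apply isOpen_biInter_finset
    intro i _
    have h1 : {p : Bs | p i = true} = (fun p : Bs => p i) ⁻¹' {true} := rfl
    rw [h1]
    exact (continuous_apply i).isOpen_preimage _ (isOpen_discrete _)

lemma psmall_finite {N : ℕ} {p : Bs} (hp : p ∈ psmall N) : (st p).Finite := by
  by_contra hinf
  have hinf' : (st p).Infinite := hinf
  obtain ⟨t, ht, hcard⟩ := hinf'.exists_subset_card_eq (N + 1)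
  have := hp t (fun i hi => ht hi)
  omega

noncomputable def bigY {N : ℕ} (y : Fin N → Bs) : Bs := fun n => decide (∃ j, y j n = true)

lemma bigY_eq_true {N : ℕ} {y : Fin N → Bs} {n : ℕ} :
    bigY y n = true ↔ ∃ j, y j n = true := by
  simp [bigY]

def UU (Cs : ℕ → Set Bs) (N : ℕ) : Set Bs :=
  {g | ∃ p : Bs, ∃ y : Fin N → Bs, p ∈ psmall N ∧ (∀ j, y j ∈ Cs 1) ∧
    lee g (j2 p (bigY y))}

lemma UU_closed {Cs : ℕ → Set Bs} (hcl : IsClosed (Cs 1)) (N : ℕ) :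
    IsClosed (UU Cs N) := by
  set S : Set (Bs × (Fin N → Bs) × Bs) :=
    (psmall N) ×ˢ (({y | ∀ j, y j ∈ Cs 1}) ×ˢ (Set.univ : Set Bs)) with hS
  set c : Bs × (Fin N → Bs) × Bs → Bs := fun ω => m2 ω.2.2 (j2 ω.1 (bigY ω.2.1)) with hc
  have heq : UU Cs N = c '' S := by
    ext g
    constructor
    · rintro ⟨p, y, hp, hy, hlee⟩
      refine ⟨(p, y, g), ⟨hp, hy, Set.mem_univ _⟩, ?_⟩
      exact m2_eq_left hlee
    · rintro ⟨⟨p, y, z⟩, ⟨hp, hy, -⟩, rfl⟩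
      exact ⟨p, y, hp, hy, lee_m2_right _ _⟩
  rw [heq]
  apply IsCompact.isClosed
  apply IsCompact.image
  · have hScl : IsClosed S := by
      apply IsClosed.prod (psmall_closed N)
      apply IsClosed.prod _ isClosed_univ
      have : {y : Fin N → Bs | ∀ j, y j ∈ Cs 1} = ⋂ j, (fun y : Fin N → Bs => y j) ⁻¹' (Cs 1) := by
        ext y; simp [Set.mem_iInter]
      rw [this]
      exact isClosed_iInter fun j => hcl.preimage (continuous_apply j)
    exact hScl.isCompact
  · -- continuity of c
    apply cont_m2
    · exact continuous_snd.comp continuous_snd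
    · apply cont_j2 continuous_fst
      apply continuous_pi
      intro n
      have hdec : (fun ω : Bs × (Fin N → Bs) × Bs => bigY ω.2.1 n) =
          (fun v : Fin N → Bool => decide (∃ j, v j = true)) ∘
            (fun ω : Bs × (Fin N → Bs) × Bs => fun j => ω.2.1 j n) := rfl
      rw [hdec]
      apply Continuous.comp
      · exact continuous_of_discreteTopology
      · apply continuous_pi
        intro j
        exact (continuous_apply n).comp ((continuous_apply j).comp
          (continuous_fst.comp continuous_snd))

lemma le_foldr_max : ∀ (l : List ℕ) (a : ℕ), a ∈ l → a ≤ l.foldr max 0 := by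
  intro l
  induction l with
  | nil => intro a ha; simp at ha
  | cons b t ih =>
      intro a ha
      rcases List.mem_cons.mp ha with rfl | ha'
      · simp only [List.foldr_cons]
        exact le_max_left _ _
      · simp only [List.foldr_cons]
        exact le_trans (ih a ha') (le_max_right _ _)

lemma ideal_iUnion_fin {I : Set (Set ℕ)} (hI : IsIdeal I) :
    ∀ (N : ℕ) (f : Fin N → Set ℕ), (∀ j, f j ∈ I) → (⋃ j, f j) ∈ I := by
  intro N
  induction N with
  | zero =>
      intro f _
      have : (⋃ j : Fin 0, f j) = ∅ := by simp
      rw [this]; exact hI.1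
  | succ N ih =>
      intro f hf
      have hsplit : (⋃ j : Fin (N+1), f j) = (⋃ j : Fin N, f j.castSucc) ∪ f (Fin.last N) := by
        ext x
        simp only [Set.mem_iUnion, Set.mem_union]
        constructor
        · rintro ⟨j, hj⟩
          rcases Fin.lastCases (motive := fun j => x ∈ f j → (∃ i : Fin N, x ∈ f i.castSucc) ∨
            x ∈ f (Fin.last N)) (fun h => Or.inr h) (fun i h => Or.inl ⟨i, h⟩) j hj with h | h
          · exact Or.inl h
          · exact Or.inr h
        · rintro (⟨j, hj⟩ | hj)
          · exact ⟨j.castSucc, hj⟩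
          · exact ⟨Fin.last N, hj⟩
      rw [hsplit]
      exact hI.2.2.1 _ _ (ih _ fun j => hf j.castSucc) (hf (Fin.last N))



/-! ### the Fin side -/

lemma phiW_fin_mem {I : Set (Set ℕ)} (hI : IsIdeal I) (hfin : ContainsFin I)
    {Cs : ℕ → Set Bs} (hGood : ∀ i, Good I (Cs i))
    (hpair : ∀ i, ∀ u v : Bs, u ∈ Cs (i+1) → v ∈ Cs (i+1) → j2 u v ∈ Cs i)
    {A : Set ℕ} (hA : phiW Cs A ≠ ⊤) : A ∈ I := by
  classical
  set B := phiW Cs A with hB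
  have hBfin : (B + 2) * 2 ≠ ⊤ := by
    apply ENNReal.mul_ne_top
    · exact ENNReal.add_ne_top.mpr ⟨hA, ENNReal.ofNat_ne_top⟩
    · exact ENNReal.ofNat_ne_top
  obtain ⟨N, hN⟩ := ENNReal.exists_nat_gt hBfin
  have hstep : ∀ n, trunc n (chi A) ∈ UU Cs N := by
    intro n
    set F := (Finset.range (n+1)).filter (fun i => i ∈ A) with hF
    have hFsub : (↑F : Set ℕ) ⊆ A := by
      intro x hx
      exact (Finset.mem_filter.mp hx).2
    have hwgt : wgt Cs F ≤ B := wgt_le_phiW hFsub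
    have hlt : wgt Cs F < B + 1 := lt_of_le_of_lt hwgt (ENNReal.lt_add_right hA one_ne_zero)
    obtain ⟨r, ⟨P, L, hLOK, hcov, rfl⟩, hr⟩ := sInf_lt_iff.mp hlt
    set d := (L.map Prod.fst).foldr max 0 with hd
    have hbd : ∀ p ∈ L, p.1 ≤ d := by
      intro p hp
      exact le_foldr_max _ _ (List.mem_map.mpr ⟨p, hp, rfl⟩)
    obtain ⟨Y, hY1, hY2, hY3⟩ := merge_main hpair d L hLOK hbd
    -- numeric bounds
    have hcostL : lcost L ≤ B + 1 := by
      calc lcost L ≤ ↑P.card + lcost L := le_add_self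
        _ ≤ B + 1 := hr.le
    have hYhalf : (Y.length : ℝ≥0∞) * 2⁻¹ ≤ B + 2 := by
      calc (Y.length : ℝ≥0∞) * 2⁻¹ ≤ (Y.length : ℝ≥0∞) * 2⁻¹ + (2:ℝ≥0∞)⁻¹ ^ d := le_add_self.trans (by rw [add_comm])
        _ ≤ lcost L + 1 := hY3
        _ ≤ (B + 1) + 1 := add_le_add hcostL le_rfl
        _ = B + 2 := by ring
    have hYlen : (Y.length : ℝ≥0∞) ≤ (B + 2) * 2 := by
      have h1 := mul_le_mul_left hYhalf 2
      rwa [mul_assoc, ENNReal.inv_mul_cancel two_ne_zero ENNReal.ofNat_ne_top, mul_one] at h1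
    have hYlenN : Y.length ≤ N := by
      have := lt_of_le_of_lt hYlen hN
      exact_mod_cast this.le
    have hPcardN : P.card ≤ N := by
      have h1 : (P.card : ℝ≥0∞) ≤ B + 1 := by
        calc (P.card : ℝ≥0∞) ≤ ↑P.card + lcost L := le_add_self.trans (by rw [add_comm])
          _ ≤ B + 1 := hr.le
      have h2 : (P.card : ℝ≥0∞) < N := by
        apply lt_of_le_of_lt h1
        apply lt_of_le_of_lt _ hN
        calc B + 1 ≤ B + 2 := by gcongr <;> norm_num
          _ ≤ (B + 2) * 2 := le_mul_of_one_le_right zero_le (by norm_num)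
      exact_mod_cast h2.le
    refine ⟨chi ↑P, fun j => Y.getD j bbot, ?_, ?_, ?_⟩
    · -- psmall
      intro F' hF'
      have hsub : F' ⊆ P := by
        intro i hi
        have := hF' i hi
        rw [chi_eq_true] at this
        exact_mod_cast this
      exact le_trans (Finset.card_le_card hsub) hPcardN
    · -- pieces
      intro j
      show Y.getD (j : ℕ) bbot ∈ Cs 1
      by_cases hj : (j : ℕ) < Y.length
      · rw [List.getD_eq_getElem Y bbot hj]
        exact hY1 _ (Y.getElem_mem hj)
      · rw [List.getD_eq_default Y bbot (by omega)]
        exact bbot_mem_Good (hGood 1) hI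
    · -- covering
      intro i hi
      have h1 : i ≤ n ∧ i ∈ A := by
        by_cases hin : i ≤ n
        · refine ⟨hin, ?_⟩
          simp only [trunc, hin, if_true] at hi
          exact chi_eq_true.mp hi
        · simp [trunc, hin] at hi
      have hiF : i ∈ F := Finset.mem_filter.mpr ⟨Finset.mem_range.mpr (by omega), h1.2⟩
      rcases hcov i hiF with hc | hc
      · exact j2_eq_true.mpr (Or.inl (chi_eq_true.mpr (by exact_mod_cast hc)))
      · have h2 := hY2 i hc
        obtain ⟨y0, hy0, hy0i⟩ := lsupY_eq_true_iff.mp h2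
        obtain ⟨idx, hidx, hEq⟩ := List.getElem_of_mem hy0
        refine j2_eq_true.mpr (Or.inr (bigY_eq_true.mpr ?_))
        refine ⟨⟨idx, lt_of_lt_of_le hidx hYlenN⟩, ?_⟩
        show Y.getD idx bbot i = true
        rw [List.getD_eq_getElem Y bbot hidx, hEq]
        exact hy0i
  have hUcl : IsClosed (UU Cs N) := UU_closed (hGood 1).1 N
  have hU : chi A ∈ UU Cs N :=
    hUcl.mem_of_tendsto (tendsto_trunc (chi A)) (Filter.Eventually.of_forall hstep)
  obtain ⟨p, y, hp, hy, hlee⟩ := hU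
  have hsub : A ⊆ st p ∪ ⋃ j : Fin N, st (y j) := by
    intro i hiA
    have h1 := hlee i (chi_eq_true.mpr hiA)
    rcases j2_eq_true.mp h1 with h2 | h2
    · exact Or.inl h2
    · obtain ⟨j, hj⟩ := bigY_eq_true.mp h2
      exact Or.inr (Set.mem_iUnion.mpr ⟨j, hj⟩)
  apply hI.2.2.2 _ _ hsub
  apply hI.2.2.1
  · exact hfin _ (psmall_finite hp)
  · exact ideal_iUnion_fin hI N (fun j => st (y j))
      (fun j => mem_chi_image.mp ((hGood 1).2.2.2 (hy j)))



/-! ### assembling the forward direction -/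

lemma phiW_inter_le {Cs : ℕ → Set Bs} (A : Set ℕ) (n : ℕ) :
    phiW Cs (A ∩ {k | k ≤ n}) ≤ (n : ℝ≥0∞) + 1 := by
  apply iSup_le
  intro F
  apply iSup_le
  intro hF
  have hsub : F ⊆ Finset.range (n+1) := by
    intro i hi
    have := hF hi
    simp only [Set.mem_inter_iff, Set.mem_setOf_eq] at this
    exact Finset.mem_range.mpr (by omega)
  calc wgt Cs F ≤ F.card := wgt_le_card Cs F
    _ ≤ ((n+1 : ℕ) : ℝ≥0∞) := by
        have := Finset.card_le_card hsub
        rw [Finset.card_range] at this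
        exact_mod_cast this
    _ = (n : ℝ≥0∞) + 1 := by push_cast; ring

lemma phiW_split_le {Cs : ℕ → Set Bs} (A : Set ℕ) (n : ℕ) :
    phiW Cs A ≤ phiW Cs (A ∩ {k | k ≤ n}) + phiW Cs (A \ {k | k ≤ n}) := by
  have h1 : A = (A ∩ {k | k ≤ n}) ∪ (A \ {k | k ≤ n}) := by
    rw [Set.inter_union_diff]
  calc phiW Cs A = phiW Cs ((A ∩ {k | k ≤ n}) ∪ (A \ {k | k ≤ n})) := by rw [← h1]
    _ ≤ _ := phiW_subadd Cs _ _

theorem forward {I : Set (Set ℕ)} (hI : IsIdeal I) (hfin : ContainsFin I)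
    (hFs : IsFsigma (chi '' I)) (hP : IsPIdeal I) :
    ∃ φ : Set ℕ → ℝ≥0∞, IsLSCSM φ ∧ I = ExhPhi φ ∧ I = FinPhi φ := by
  classical
  obtain ⟨F0, hF0cl, hF0un⟩ := hFs
  set F : ℕ → Set Bs := fun n => ⋃ i ∈ Finset.range (n+1), F0 i with hFdef
  have hFcl : ∀ n, IsClosed (F n) := fun n => isClosed_biUnion_finset (fun i _ => hF0cl i)
  have hFmono : ∀ a b, a ≤ b → F a ⊆ F b := by
    intro a b hab x hx
    simp only [hFdef, Set.mem_iUnion, Finset.mem_range] at hx ⊢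
    obtain ⟨i, hi, hxi⟩ := hx
    exact ⟨i, by omega, hxi⟩
  have hFun : chi '' I = ⋃ n, F n := by
    rw [hF0un]
    ext x
    simp only [Set.mem_iUnion, hFdef, Finset.mem_range]
    constructor
    · rintro ⟨n, hn⟩
      exact ⟨n, n, by omega, hn⟩
    · rintro ⟨n, i, _, hx⟩
      exact ⟨i, hx⟩
  have hFsubJ : ∀ n, F n ⊆ chi '' I := by
    intro n
    rw [hFun]
    exact Set.subset_iUnion F n
  obtain ⟨M, hM⟩ := Mbound hI hP hFcl hFmono hFun
  have hGood0 : Good I (Gm F M) :=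
    ⟨Gm_closed hFcl M, fun f g hlee hf => Gm_hered hlee hf, hM, Gm_subJ hI hfin hFsubJ M⟩
  set Cs : ℕ → Set Bs := fun i => (tw hI hP hGood0 i).1 with hCs
  have hGoodAll : ∀ i, Good I (Cs i) := fun i => tw_good hI hP hGood0 i
  have hpair : ∀ i, ∀ u v : Bs, u ∈ Cs (i+1) → v ∈ Cs (i+1) → j2 u v ∈ Cs i :=
    fun i => tw_pair hI hP hGood0 i
  -- the two membership characterizations
  have hExhMem : ∀ A ∈ I, Tendsto (fun n => phiW Cs (A \ {k | k ≤ n})) atTop (nhds 0) := by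
    intro A hA
    rw [ENNReal.tendsto_atTop_zero]
    intro ε hε
    obtain ⟨i0, hi0⟩ := exists_inv_two_pow_lt hε.ne'
    obtain ⟨m, hm⟩ := (hGoodAll (i0+1)).2.2.1 (chi A) ⟨A, hA, rfl⟩
    refine ⟨m, fun n hn => ?_⟩
    have h1 := phiW_tail_small (i := i0+1) (by omega) (hGoodAll (i0+1)).2.1 hm hn
    apply le_trans h1
    apply le_of_lt
    apply lt_of_le_of_lt _ hi0
    apply pow_le_pow_of_le_one zero_le _ (by omega)
    exact ENNReal.inv_le_one.mpr (by norm_num)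
  have hFinOfExh : ∀ A : Set ℕ,
      Tendsto (fun n => phiW Cs (A \ {k | k ≤ n})) atTop (nhds 0) → phiW Cs A ≠ ⊤ := by
    intro A hA
    obtain ⟨n, hn⟩ := (ENNReal.tendsto_atTop_zero.mp hA) 1 one_pos
    have h1 : phiW Cs A ≤ ((n : ℝ≥0∞) + 1) + 1 := by
      calc phiW Cs A ≤ phiW Cs (A ∩ {k | k ≤ n}) + phiW Cs (A \ {k | k ≤ n}) :=
            phiW_split_le A n
        _ ≤ ((n : ℝ≥0∞) + 1) + 1 := add_le_add (phiW_inter_le A n) (hn n le_rfl)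
    intro hc
    rw [hc] at h1
    have h2 : ((n : ℝ≥0∞) + 1) + 1 ≠ ⊤ := by
      apply ENNReal.add_ne_top.mpr
      refine ⟨ENNReal.add_ne_top.mpr ⟨ENNReal.natCast_ne_top n, ENNReal.one_ne_top⟩,
        ENNReal.one_ne_top⟩
    exact h2 (top_le_iff.mp h1)
  refine ⟨phiW Cs, phiW_lscsm Cs, ?_, ?_⟩
  · ext A
    constructor
    · intro hA
      exact hExhMem A hA
    · intro hA
      exact phiW_fin_mem hI hfin hGoodAll hpair (hFinOfExh A hA)
  · ext A
    constructor
    · intro hA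
      rw [FinPhi, Set.mem_setOf_eq, lt_top_iff_ne_top]
      exact hFinOfExh A (hExhMem A hA)
    · intro hA
      rw [FinPhi, Set.mem_setOf_eq, lt_top_iff_ne_top] at hA
      exact phiW_fin_mem hI hfin hGoodAll hpair hA


end Solecki

/-- Solecki: `I` is an `Fσ` P-ideal iff `I = Exh(φ) = Fin(φ)` for some lscsm `φ`. -/
theorem solecki_fsigma_pideal (I : Set (Set ℕ)) (hI : IsIdeal I) (hfin : ContainsFin I) :
    (IsFsigma (chi '' I) ∧ IsPIdeal I) ↔
      ∃ φ : Set ℕ → ℝ≥0∞, IsLSCSM φ ∧ I = ExhPhi φ ∧ I = FinPhi φ := by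
  constructor
  · rintro ⟨h1, h2⟩
    exact Solecki.forward hI hfin h1 h2
  · rintro ⟨φ, h1, h2, h3⟩
    exact Solecki.backward I hI hfin φ h1 h2 h3
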